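/- arXiv:1301.2441 — 8 statements merged into one kernel-verified Lean document; each statement's English description precedes it below -/
import Mathlib

section
/- Let f : ℝ^d → ℂ be a negative definite function and define f*(u) = sup_{|x| ≤ u} Re f(x). Then for all s, r > 0: (1/2)·(s²/(s²+1))·f*(r) ≤ f*(s·r) ≤ 2(1+s²)·f*(r). -/
open Set Complex

set_option maxHeartbeats 1000000 in
/-- Scaling property of `f*` for a negative definite function `f`. -/
theorem stmt_0 {d : ℕ} (f : EuclideanSpace ℝ (Fin d) → ℂ)
    (hf0 : 0 ≤ (f 0).re ∧ (f 0).im = 0)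
    (hsymm : ∀ x, f (-x) = starRingEnd ℂ (f x))
    (hneg : ∀ (n : ℕ) (x : Fin n → EuclideanSpace ℝ (Fin d)) (c : Fin n → ℂ),
      (∑ j, c j) = 0 →
      (∑ j, ∑ k, f (x j - x k) * c j * starRingEnd ℂ (c k)).re ≤ 0)
    (fstar : ℝ → ℝ)
    (hfstar : ∀ u, fstar u = sSup ((fun x => (f x).re) '' {x | ‖x‖ ≤ u})) :
    ∀ s r : ℝ, 0 < s → 0 < r →
      (1 / 2) * (s ^ 2 / (s ^ 2 + 1)) * fstar r ≤ fstar (s * r) ∧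
      fstar (s * r) ≤ 2 * (1 + s ^ 2) * fstar r := by
  intro s r hs hr
  set g : EuclideanSpace ℝ (Fin d) → ℝ := fun x => (f x).re - (f 0).re with hgdef
  -- nonnegativity of g
  have hgpos : ∀ x, 0 ≤ g x := by
    intro x
    have h := hneg 2 ![x, 0] ![1, -1] (by simp)
    simp only [Fin.sum_univ_two, Matrix.cons_val_zero, Matrix.cons_val_one, Matrix.head_cons,
      sub_self, sub_zero, zero_sub, hsymm] at h
    simp [Complex.add_re, Complex.mul_re, Complex.conj_re, Complex.conj_im] at h
    simp only [hgdef]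
    nlinarith [h]
  -- the quadratic form inequality from 3 points
  have hquad : ∀ (x y : EuclideanSpace ℝ (Fin d)) (a b : ℝ),
      0 ≤ g x * a ^ 2 + (g x + g y - g (x + y)) * (a * b) + g y * b ^ 2 := by
    intro x y a b
    have h := hneg 3 ![0, x, -y] ![-((a:ℂ)+b), (a:ℂ), (b:ℂ)]
      (by simp only [Fin.sum_univ_three, Matrix.cons_val_zero, Matrix.cons_val_one,
        Matrix.head_cons, Matrix.cons_val_two, Matrix.tail_cons]; ring)
    have e1 : (0 : EuclideanSpace ℝ (Fin d)) - x = -x := by abel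
    have e2 : (0 : EuclideanSpace ℝ (Fin d)) - -y = y := by abel
    have e3 : x - (0 : EuclideanSpace ℝ (Fin d)) = x := by abel
    have e4 : x - -y = x + y := by abel
    have e5 : -y - (0 : EuclideanSpace ℝ (Fin d)) = -y := by abel
    have e6 : -y - x = -(x + y) := by abel
    have e0 : (0 : EuclideanSpace ℝ (Fin d)) - 0 = 0 := by abel
    simp only [Fin.sum_univ_three, Matrix.cons_val_zero, Matrix.cons_val_one, Matrix.head_cons,
      Matrix.cons_val_two, Matrix.tail_cons, sub_self, e0, e1, e2, e3, e4, e5, e6, hsymm] at h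
    simp only [map_neg, map_add, Complex.conj_ofReal, Complex.add_re, Complex.mul_re,
      Complex.neg_re, Complex.neg_im, Complex.add_im, Complex.ofReal_re, Complex.ofReal_im,
      Complex.conj_re, Complex.conj_im] at h
    simp only [hgdef]
    nlinarith [h]
  -- discriminant
  have hdisc : ∀ x y : EuclideanSpace ℝ (Fin d),
      (g x + g y - g (x + y)) ^ 2 ≤ 4 * (g x * g y) := by
    intro x y
    have h := discrim_le_zero (a := g x) (b := g x + g y - g (x + y)) (c := g y)
      (fun t => by nlinarith [hquad x y t 1])
    simp only [discrim] at h
    nlinarith [h]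
  -- subadditivity of sqrt ∘ g
  have hsub : ∀ x y : EuclideanSpace ℝ (Fin d),
      Real.sqrt (g (x + y)) ≤ Real.sqrt (g x) + Real.sqrt (g y) := by
    intro x y
    have h1 := hdisc x y
    have habs : |g x + g y - g (x + y)| ≤ 2 * (Real.sqrt (g x) * Real.sqrt (g y)) := by
      rw [← Real.sqrt_sq_eq_abs]
      calc Real.sqrt ((g x + g y - g (x + y)) ^ 2) ≤ Real.sqrt (4 * (g x * g y)) :=
            Real.sqrt_le_sqrt h1
        _ = 2 * Real.sqrt (g x * g y) := by
            rw [show (4 : ℝ) * (g x * g y) = 2 ^ 2 * (g x * g y) by ring,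
              Real.sqrt_mul (by positivity), Real.sqrt_sq (by norm_num)]
        _ = 2 * (Real.sqrt (g x) * Real.sqrt (g y)) := by
            rw [Real.sqrt_mul (hgpos x)]
    have h3 : g (x + y) ≤ (Real.sqrt (g x) + Real.sqrt (g y)) ^ 2 := by
      have sx := Real.sq_sqrt (hgpos x)
      have sy := Real.sq_sqrt (hgpos y)
      have := neg_abs_le (g x + g y - g (x + y))
      nlinarith [habs]
    calc Real.sqrt (g (x + y)) ≤ Real.sqrt ((Real.sqrt (g x) + Real.sqrt (g y)) ^ 2) :=
          Real.sqrt_le_sqrt h3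
      _ = Real.sqrt (g x) + Real.sqrt (g y) := Real.sqrt_sq (by positivity)
  -- iterate
  have hiter : ∀ (n : ℕ) (x : EuclideanSpace ℝ (Fin d)),
      Real.sqrt (g ((n : ℝ) • x)) ≤ (n : ℝ) * Real.sqrt (g x) := by
    intro n
    induction n with
    | zero => intro x; simp [hgdef]
    | succ n ih =>
      intro x
      have e : ((n + 1 : ℕ) : ℝ) • x = (n : ℝ) • x + x := by
        push_cast
        rw [add_smul, one_smul]
      rw [e]
      calc Real.sqrt (g ((n : ℝ) • x + x)) ≤ Real.sqrt (g ((n : ℝ) • x)) + Real.sqrt (g x) :=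
            hsub _ _
        _ ≤ (n : ℝ) * Real.sqrt (g x) + Real.sqrt (g x) := by linarith [ih x]
        _ = ((n + 1 : ℕ) : ℝ) * Real.sqrt (g x) := by push_cast; ring
  -- key scaling estimate
  have hkey : ∀ (n : ℕ) (x : EuclideanSpace ℝ (Fin d)), 0 < n →
      g x ≤ (n : ℝ) ^ 2 * g (((n : ℝ))⁻¹ • x) := by
    intro n x hn
    set z := ((n : ℝ))⁻¹ • x with hz
    have hx : x = (n : ℝ) • z := by
      rw [hz, smul_inv_smul₀ (by exact_mod_cast hn.ne')]
    have h := hiter n z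
    rw [← hx] at h
    have h2 := mul_le_mul h h (Real.sqrt_nonneg _) (by positivity)
    rw [Real.mul_self_sqrt (hgpos x)] at h2
    nlinarith [Real.mul_self_sqrt (hgpos z), h2]
  have hmem0 : ∀ u : ℝ, 0 ≤ u → (f 0).re ∈ (fun x => (f x).re) '' {x | ‖x‖ ≤ u} := by
    intro u hu
    exact ⟨0, by simpa using hu, rfl⟩
  -- membership of rescaled points
  have hball : ∀ r₁ r₂ : ℝ, 0 < r₁ → 0 < r₂ → ∀ x : EuclideanSpace ℝ (Fin d), ‖x‖ ≤ r₂ →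
      ‖((⌈r₂ / r₁⌉₊ : ℝ))⁻¹ • x‖ ≤ r₁ := by
    intro r₁ r₂ h₁ h₂ x hx
    have hn : 0 < (⌈r₂ / r₁⌉₊ : ℝ) := by exact_mod_cast Nat.ceil_pos.mpr (div_pos h₂ h₁)
    have hle : r₂ / r₁ ≤ (⌈r₂ / r₁⌉₊ : ℝ) := Nat.le_ceil _
    rw [norm_smul, norm_inv, Real.norm_natCast]
    rw [inv_mul_le_iff₀ hn]
    calc ‖x‖ ≤ r₂ := hx
      _ ≤ (⌈r₂ / r₁⌉₊ : ℝ) * r₁ := by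
          rw [div_le_iff₀ h₁] at hle; linarith
  -- main comparison lemma in the bounded case
  have hcomp : ∀ r₁ r₂ : ℝ, 0 < r₁ → 0 < r₂ →
      BddAbove ((fun x => (f x).re) '' {x | ‖x‖ ≤ r₁}) →
      BddAbove ((fun x => (f x).re) '' {x | ‖x‖ ≤ r₂}) ∧
        fstar r₂ ≤ ((⌈r₂ / r₁⌉₊ : ℝ)) ^ 2 * fstar r₁ := by
    intro r₁ r₂ h₁ h₂ hB
    have hf1 : (f 0).re ≤ sSup ((fun x => (f x).re) '' {x | ‖x‖ ≤ r₁}) :=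
      le_csSup hB (hmem0 r₁ h₁.le)
    have hSup0 : 0 ≤ sSup ((fun x => (f x).re) '' {x | ‖x‖ ≤ r₁}) := le_trans hf0.1 hf1
    have hn1 : (1 : ℝ) ≤ (⌈r₂ / r₁⌉₊ : ℝ) := by
      exact_mod_cast Nat.one_le_cast.mpr (Nat.ceil_pos.mpr (div_pos h₂ h₁))
    have hn2 : (1 : ℝ) ≤ (⌈r₂ / r₁⌉₊ : ℝ) ^ 2 := by nlinarith
    have hbd : ∀ y ∈ (fun x => (f x).re) '' {x | ‖x‖ ≤ r₂},
        y ≤ ((⌈r₂ / r₁⌉₊ : ℝ)) ^ 2 * sSup ((fun x => (f x).re) '' {x | ‖x‖ ≤ r₁}) := by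
      rintro _ ⟨x, hx, rfl⟩
      have h1 := hkey ⌈r₂ / r₁⌉₊ x (Nat.ceil_pos.mpr (div_pos h₂ h₁))
      have h2 : (f (((⌈r₂ / r₁⌉₊ : ℝ))⁻¹ • x)).re ≤
          sSup ((fun x => (f x).re) '' {x | ‖x‖ ≤ r₁}) :=
        le_csSup hB ⟨_, hball r₁ r₂ h₁ h₂ x hx, rfl⟩
      have h3 : g (((⌈r₂ / r₁⌉₊ : ℝ))⁻¹ • x) ≤
          sSup ((fun x => (f x).re) '' {x | ‖x‖ ≤ r₁}) - (f 0).re := by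
        simp only [hgdef]; linarith
      have h4 : ((⌈r₂ / r₁⌉₊ : ℝ)) ^ 2 * g (((⌈r₂ / r₁⌉₊ : ℝ))⁻¹ • x) ≤
          ((⌈r₂ / r₁⌉₊ : ℝ)) ^ 2 *
            (sSup ((fun x => (f x).re) '' {x | ‖x‖ ≤ r₁}) - (f 0).re) :=
        mul_le_mul_of_nonneg_left h3 (by positivity)
      have h5 : (f 0).re ≤ ((⌈r₂ / r₁⌉₊ : ℝ)) ^ 2 * (f 0).re := by
        nlinarith [hf0.1, hn2]
      have h6 : g x = (f x).re - (f 0).re := by simp only [hgdef]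
      simp only
      nlinarith [h1, h4, h5]
    refine ⟨⟨_, fun y hy => hbd y hy⟩, ?_⟩
    rw [hfstar, hfstar]
    exact Real.sSup_le hbd (by positivity)
  -- split on boundedness
  by_cases hB : BddAbove ((fun x => (f x).re) '' {x | ‖x‖ ≤ r})
  · -- bounded case
    have hsr : 0 < s * r := mul_pos hs hr
    have hfr0 : 0 ≤ fstar r := by
      rw [hfstar]
      exact le_trans hf0.1 (le_csSup hB (hmem0 r hr.le))
    obtain ⟨hB2, hup⟩ := hcomp r (s * r) hr hsr hB
    have hfsr0 : 0 ≤ fstar (s * r) := by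
      rw [hfstar]
      exact le_trans hf0.1 (le_csSup hB2 (hmem0 (s * r) hsr.le))
    obtain ⟨_, hdown⟩ := hcomp (s * r) r hsr hr hB2
    have ec1 : s * r / r = s := by field_simp
    have ec2 : r / (s * r) = s⁻¹ := by
      rw [mul_comm, ← div_div, div_self hr.ne', one_div]
    rw [ec1] at hup
    rw [ec2] at hdown
    have hcs : (⌈s⌉₊ : ℝ) < s + 1 := Nat.ceil_lt_add_one hs.le
    have hcs0 : (0 : ℝ) ≤ (⌈s⌉₊ : ℝ) := by positivity
    have hcsi : (⌈s⁻¹⌉₊ : ℝ) < s⁻¹ + 1 := Nat.ceil_lt_add_one (by positivity)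
    have hcsi0 : (0 : ℝ) ≤ (⌈s⁻¹⌉₊ : ℝ) := by positivity
    constructor
    · -- lower bound
      have hm2 : (⌈s⁻¹⌉₊ : ℝ) ^ 2 ≤ (s⁻¹ + 1) ^ 2 := by nlinarith
      have h1 : fstar r ≤ (s⁻¹ + 1) ^ 2 * fstar (s * r) :=
        le_trans hdown (mul_le_mul_of_nonneg_right hm2 hfsr0)
      have key : s ^ 2 * (s⁻¹ + 1) ^ 2 = (1 + s) ^ 2 := by
        field_simp
      have h2 : s ^ 2 * fstar r ≤ (1 + s) ^ 2 * fstar (s * r) := by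
        calc s ^ 2 * fstar r ≤ s ^ 2 * ((s⁻¹ + 1) ^ 2 * fstar (s * r)) :=
              mul_le_mul_of_nonneg_left h1 (by positivity)
          _ = (1 + s) ^ 2 * fstar (s * r) := by rw [← mul_assoc, key]
      have h3 : (1 + s) ^ 2 * fstar (s * r) ≤ 2 * (s ^ 2 + 1) * fstar (s * r) := by
        nlinarith [sq_nonneg (s - 1), hfsr0]
      have hne : s ^ 2 + 1 ≠ 0 := by positivity
      have hgoal : (1 / 2) * (s ^ 2 / (s ^ 2 + 1)) * fstar r =
          s ^ 2 * fstar r / (2 * (s ^ 2 + 1)) := by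
        field_simp
      rw [hgoal, div_le_iff₀ (by positivity)]
      nlinarith [h2, h3]
    · -- upper bound
      have hn2 : (⌈s⌉₊ : ℝ) ^ 2 ≤ 2 * (1 + s ^ 2) := by nlinarith [sq_nonneg (s - 1)]
      calc fstar (s * r) ≤ (⌈s⌉₊ : ℝ) ^ 2 * fstar r := hup
        _ ≤ 2 * (1 + s ^ 2) * fstar r := mul_le_mul_of_nonneg_right hn2 hfr0
  · -- unbounded case
    have hB2 : ¬ BddAbove ((fun x => (f x).re) '' {x | ‖x‖ ≤ s * r}) := by
      intro hB2
      exact hB (hcomp (s * r) r (mul_pos hs hr) hr hB2).1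
    have h1 : fstar r = 0 := by rw [hfstar]; exact Real.sSup_of_not_bddAbove hB
    have h2 : fstar (s * r) = 0 := by rw [hfstar]; exact Real.sSup_of_not_bddAbove hB2
    rw [h1, h2]
    norm_num
end

section
/- Let f : ℝ^d → [0,∞) with f(0) = 0 and set f̃(u) = sup_{|x| = u} f(x), f*(u) = sup_{|x| ≤ u} f(x). Suppose f̃ is positive on (0,∞) and f satisfies the weak lower scaling condition WLSC(β, θ, C), i.e. f(λx) ≥ C λ^β f(x) for all λ ≥ 1 and |x| ≥ θ > 0. Then f* satisfies WLSC(β, θ, C²·f̃(θ)/f*(θ)), i.e. f*(λu) ≥ C²·(f̃(θ)/f*(θ))·λ^β·f*(u) for all λ ≥ 1 and u ≥ θ. -/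
open Set

set_option maxHeartbeats 1000000 in
/-- Weak lower scaling passes from `f` to `f*`. -/
theorem stmt_1 {d : ℕ} (f : EuclideanSpace ℝ (Fin d) → ℝ)
    (hfnonneg : ∀ x, 0 ≤ f x) (hf0 : f 0 = 0)
    (ftilde fstar : ℝ → ℝ)
    (hftilde : ∀ u, ftilde u = sSup (f '' {x | ‖x‖ = u}))
    (hfstar : ∀ u, fstar u = sSup (f '' {x | ‖x‖ ≤ u}))
    (hpos : ∀ u : ℝ, 0 < u → 0 < ftilde u)
    (β θ C : ℝ) (hβ : 0 < β) (hθ : 0 < θ) (hC : 0 < C)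
    (hwlsc : ∀ lam : ℝ, 1 ≤ lam → ∀ x : EuclideanSpace ℝ (Fin d), θ ≤ ‖x‖ →
      C * lam ^ β * f x ≤ f (lam • x)) :
    ∀ lam : ℝ, 1 ≤ lam → ∀ u : ℝ, θ ≤ u →
      C ^ 2 * (ftilde θ / fstar θ) * lam ^ β * fstar u ≤ fstar (lam * u) := by
  intro lam hlam u hu
  have hlam0 : 0 < lam := lt_of_lt_of_le one_pos hlam
  have hu0 : 0 < u := lt_of_lt_of_le hθ hu
  have hlu : θ ≤ lam * u := le_trans hu (le_mul_of_one_le_left hu0.le hlam)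
  have hlu0 : 0 < lam * u := mul_pos hlam0 hu0
  have hfstar_nonneg : ∀ R : ℝ, 0 ≤ fstar R := by
    intro R
    rw [hfstar]
    apply Real.sSup_nonneg
    rintro y ⟨x, -, rfl⟩
    exact hfnonneg x
  rcases eq_or_lt_of_le (hfstar_nonneg θ) with h0 | hsθ
  · rw [← h0, div_zero]
    simpa using hfstar_nonneg (lam * u)
  -- there is a point on the sphere of radius θ with positive value
  have hx0 : ∃ x0 : EuclideanSpace ℝ (Fin d), ‖x0‖ = θ ∧ 0 < f x0 := by
    by_contra h
    push_neg at h
    have hle : ftilde θ ≤ 0 := by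
      rw [hftilde]
      apply Real.sSup_le _ le_rfl
      rintro y ⟨x, hx, rfl⟩
      exact h x hx
    exact absurd (hpos θ hθ) (not_lt.mpr hle)
  obtain ⟨x0, hx0n, hx0p⟩ := hx0
  have hC1 : C ≤ 1 := by
    have h := hwlsc 1 le_rfl x0 (le_of_eq hx0n.symm)
    rw [one_smul, Real.one_rpow, mul_one] at h
    nlinarith
  have hball_θ : BddAbove (f '' {x : EuclideanSpace ℝ (Fin d) | ‖x‖ ≤ θ}) := by
    by_contra h
    have h2 := Real.sSup_of_not_bddAbove h
    rw [← hfstar θ] at h2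
    exact absurd h2 (ne_of_gt hsθ)
  have hbdd : ∀ R : ℝ, 0 ≤ R → BddAbove (f '' {x : EuclideanSpace ℝ (Fin d) | ‖x‖ ≤ R}) := by
    intro R hR
    rcases le_or_gt R θ with hRθ | hRθ
    · exact BddAbove.mono (image_mono (f := f) (fun x hx => le_trans hx hRθ)) hball_θ
    · have h2R : 0 < 2 * R := by linarith
      have hsph : BddAbove (f '' {x : EuclideanSpace ℝ (Fin d) | ‖x‖ = 2 * R}) := by
        by_contra h
        have h2 := Real.sSup_of_not_bddAbove h
        rw [← hftilde (2 * R)] at h2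
        exact absurd h2 (ne_of_gt (hpos _ h2R))
      obtain ⟨M, hM⟩ := hsph
      obtain ⟨M0, hM0⟩ := hball_θ
      refine ⟨max M0 (M / C), ?_⟩
      rintro y ⟨x, hx, rfl⟩
      simp only [mem_setOf_eq] at hx
      rcases le_or_gt ‖x‖ θ with hxθ | hxθ
      · exact le_max_of_le_left (hM0 ⟨x, hxθ, rfl⟩)
      · have hxpos : 0 < ‖x‖ := lt_trans hθ hxθ
        set t := 2 * R / ‖x‖ with ht
        have ht1 : 1 ≤ t := by
          rw [le_div_iff₀ hxpos]
          linarith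
        have hwx := hwlsc t ht1 x hxθ.le
        have hnorm : ‖t • x‖ = 2 * R := by
          rw [norm_smul, Real.norm_eq_abs, abs_of_pos (lt_of_lt_of_le one_pos ht1), ht,
            div_mul_cancel₀ _ (ne_of_gt hxpos)]
        have hfM : f (t • x) ≤ M := hM ⟨t • x, hnorm, rfl⟩
        have htβ : (1 : ℝ) ≤ t ^ β := by
          have := Real.rpow_le_rpow zero_le_one ht1 hβ.le
          rwa [Real.one_rpow] at this
        have hfx : C * f x ≤ f (t • x) := by
          nlinarith [mul_le_mul_of_nonneg_left htβ (mul_nonneg hC.le (hfnonneg x))]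
        have : f x ≤ M / C := by
          rw [le_div_iff₀ hC]
          nlinarith
        exact le_max_of_le_right this
  have hbu : BddAbove (f '' {x : EuclideanSpace ℝ (Fin d) | ‖x‖ ≤ lam * u}) := hbdd _ hlu0.le
  have hfstar_ge : ∀ x : EuclideanSpace ℝ (Fin d), ‖x‖ ≤ lam * u → f x ≤ fstar (lam * u) := by
    intro x hx
    rw [hfstar]
    exact le_csSup hbu ⟨x, hx, rfl⟩
  have hlb : 0 < lam ^ β := Real.rpow_pos_of_pos hlam0 β
  have hA : C * lam ^ β * ftilde θ ≤ fstar (lam * u) := by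
    have hkey : ∀ y : EuclideanSpace ℝ (Fin d), ‖y‖ = θ →
        C * lam ^ β * f y ≤ fstar (lam * u) := by
      intro y hy
      set t := lam * u / θ with ht
      have ht1 : 1 ≤ t := by
        rw [le_div_iff₀ hθ]
        linarith
      have hwy := hwlsc t ht1 y (le_of_eq hy.symm)
      have hnorm : ‖t • y‖ = lam * u := by
        rw [norm_smul, Real.norm_eq_abs, abs_of_pos (lt_of_lt_of_le one_pos ht1), hy, ht,
          div_mul_cancel₀ _ (ne_of_gt hθ)]
      have hlt : lam ≤ t := by
        rw [ht, le_div_iff₀ hθ]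
        nlinarith
      have htβ : lam ^ β ≤ t ^ β := Real.rpow_le_rpow hlam0.le hlt hβ.le
      have h1 : C * lam ^ β * f y ≤ C * t ^ β * f y :=
        mul_le_mul_of_nonneg_right (mul_le_mul_of_nonneg_left htβ hC.le) (hfnonneg y)
      calc C * lam ^ β * f y ≤ C * t ^ β * f y := h1
        _ ≤ f (t • y) := hwy
        _ ≤ fstar (lam * u) := hfstar_ge _ (le_of_eq hnorm)
    have hpos' : 0 < C * lam ^ β := mul_pos hC hlb
    have hle : ftilde θ ≤ fstar (lam * u) / (C * lam ^ β) := by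
      rw [hftilde]
      apply Real.sSup_le
      · rintro z ⟨y, hy, rfl⟩
        rw [le_div_iff₀ hpos']
        have := hkey y hy
        nlinarith
      · exact div_nonneg (hfstar_nonneg _) hpos'.le
    rw [le_div_iff₀ hpos'] at hle
    nlinarith
  have hft_le : ftilde θ ≤ fstar θ := by
    rw [hftilde]
    apply Real.sSup_le _ hsθ.le
    rintro z ⟨y, hy, rfl⟩
    rw [hfstar]
    exact le_csSup hball_θ ⟨y, le_of_eq hy, rfl⟩
  have hftθ : 0 < ftilde θ := hpos θ hθ
  have hr0 : 0 ≤ ftilde θ / fstar θ := div_nonneg hftθ.le (hfstar_nonneg θ)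
  have hr1 : ftilde θ / fstar θ ≤ 1 := (div_le_one hsθ).mpr hft_le
  have hmain : ∀ x : EuclideanSpace ℝ (Fin d), ‖x‖ ≤ u →
      C ^ 2 * (ftilde θ / fstar θ) * lam ^ β * f x ≤ fstar (lam * u) := by
    intro x hx
    rcases le_or_gt θ ‖x‖ with hxθ | hxθ
    · have hw := hwlsc lam hlam x hxθ
      have hn : ‖lam • x‖ ≤ lam * u := by
        rw [norm_smul, Real.norm_eq_abs, abs_of_pos hlam0]
        exact mul_le_mul_of_nonneg_left hx hlam0.le
      have h1 : f (lam • x) ≤ fstar (lam * u) := hfstar_ge _ hn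
      have hCr : C ^ 2 * (ftilde θ / fstar θ) ≤ C := by nlinarith [hC.le]
      have h2 := mul_le_mul_of_nonneg_right hCr (mul_nonneg hlb.le (hfnonneg x))
      nlinarith
    · have h1 : f x ≤ fstar θ := by
        rw [hfstar θ]
        exact le_csSup hball_θ ⟨x, hxθ.le, rfl⟩
      have heq : C ^ 2 * (ftilde θ / fstar θ) * lam ^ β * fstar θ
          = C ^ 2 * lam ^ β * ftilde θ := by
        field_simp
      have hK : 0 ≤ C ^ 2 * (ftilde θ / fstar θ) * lam ^ β :=
        mul_nonneg (mul_nonneg (sq_nonneg C) hr0) hlb.le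
      have h2 : C ^ 2 * (ftilde θ / fstar θ) * lam ^ β * f x
          ≤ C ^ 2 * lam ^ β * ftilde θ := by
        rw [← heq]
        exact mul_le_mul_of_nonneg_left h1 hK
      have h3 : C ^ 2 * lam ^ β * ftilde θ ≤ C * lam ^ β * ftilde θ := by
        have hCC : C ^ 2 ≤ C := by nlinarith
        have := mul_le_mul_of_nonneg_right hCC (mul_nonneg hlb.le hftθ.le)
        nlinarith
      linarith
  have hK : 0 < C ^ 2 * (ftilde θ / fstar θ) * lam ^ β :=
    mul_pos (mul_pos (pow_pos hC 2) (div_pos hftθ hsθ)) hlb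
  rw [hfstar u]
  have hle : sSup (f '' {x : EuclideanSpace ℝ (Fin d) | ‖x‖ ≤ u})
      ≤ fstar (lam * u) / (C ^ 2 * (ftilde θ / fstar θ) * lam ^ β) := by
    apply Real.sSup_le
    · rintro z ⟨x, hx, rfl⟩
      rw [le_div_iff₀ hK]
      have := hmain x hx
      nlinarith
    · exact div_nonneg (hfstar_nonneg _) hK.le
  rw [le_div_iff₀ hK] at hle
  nlinarith
end

section
/- Let ν₁ : (0,∞) → [0,∞) be non-increasing with ∫₀^∞ min(1, z²) ν₁(z) dz < ∞, and define ψ̃₀(r) = 2∫₀^∞ (1 - cos(rz)) ν₁(z) dz for r > 0. Then ψ̃₀(r) ≥ (2/3)·∫_{5π/(3r)}^∞ ν₁(z) dz. -/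
open Real MeasureTheory Set

private lemma aux_one_sub_cos (x : ℝ) : 1 - Real.cos x ≤ x ^ 2 / 2 := by
  have h1 : Real.cos x = 1 - 2 * Real.sin (x/2) ^ 2 := by
    have h2 := Real.cos_two_mul (x/2)
    rw [Real.cos_sq'] at h2
    have h3 : (2 : ℝ) * (x/2) = x := by ring
    rw [h3] at h2; linarith
  have h2 : Real.sin (x/2) ^ 2 ≤ (x/2) ^ 2 := Real.sin_sq_le_sq
  nlinarith

private lemma aux_cos3 (θ : ℝ) :
    Real.cos θ + Real.cos (θ - 2*π/3) + Real.cos (θ - 4*π/3) = 0 := by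
  have c1 : Real.cos (2*π/3) = -(1/2) := by
    rw [show (2*π/3:ℝ) = π - π/3 by ring, Real.cos_pi_sub, Real.cos_pi_div_three]
  have s1 : Real.sin (2*π/3) = Real.sin (π/3) := by
    rw [show (2*π/3:ℝ) = π - π/3 by ring, Real.sin_pi_sub]
  have c2 : Real.cos (4*π/3) = -(1/2) := by
    rw [show (4*π/3:ℝ) = π - (-(π/3)) by ring, Real.cos_pi_sub, Real.cos_neg,
      Real.cos_pi_div_three]
  have s2 : Real.sin (4*π/3) = -Real.sin (π/3) := by
    rw [show (4*π/3:ℝ) = π - (-(π/3)) by ring, Real.sin_pi_sub, Real.sin_neg]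
  rw [Real.cos_sub, Real.cos_sub, c1, s1, c2, s2]
  ring

private lemma aux_shift_eq (g : ℝ → ℝ) (b t : ℝ) :
    ∫ z in Ioi b, g (z - t) = ∫ z in Ioi (b - t), g z := by
  have hmp : MeasurePreserving (· - t) (volume : Measure ℝ) volume :=
    measurePreserving_sub_right volume t
  have hemb : MeasurableEmbedding (fun z : ℝ => z - t) :=
    (MeasurableEquiv.subRight t).measurableEmbedding
  have hpre : (fun z : ℝ => z - t) ⁻¹' Ioi (b - t) = Ioi b := by
    ext x; simp [sub_lt_sub_iff_right]
  rw [← hpre, hmp.setIntegral_preimage_emb hemb]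

private lemma aux_shift_int (g : ℝ → ℝ) (b t : ℝ) (h : IntegrableOn g (Ioi (b - t))) :
    IntegrableOn (fun z => g (z - t)) (Ioi b) := by
  have hmp : MeasurePreserving (· - t) (volume : Measure ℝ) volume :=
    measurePreserving_sub_right volume t
  have hemb : MeasurableEmbedding (fun z : ℝ => z - t) :=
    (MeasurableEquiv.subRight t).measurableEmbedding
  have hpre : (fun z : ℝ => z - t) ⁻¹' Ioi (b - t) = Ioi b := by
    ext x; simp [sub_lt_sub_iff_right]
  rw [← hpre]
  exact (hmp.integrableOn_comp_preimage hemb).mpr h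

/-- Tail lower bound for the one-dimensional exponent of a unimodal jump part. -/
theorem stmt_4 (ν₁ : ℝ → ℝ)
    (hnonneg : ∀ z, 0 < z → 0 ≤ ν₁ z)
    (hmono : ∀ z w : ℝ, 0 < z → z ≤ w → ν₁ w ≤ ν₁ z)
    (hint : IntegrableOn (fun z => min 1 (z ^ 2) * ν₁ z) (Ioi (0 : ℝ)))
    (ψ : ℝ → ℝ)
    (hψ : ∀ r, ψ r = 2 * ∫ z in Ioi (0 : ℝ), (1 - Real.cos (r * z)) * ν₁ z) :
    ∀ r : ℝ, 0 < r →
      (2 / 3) * ∫ z in Ioi (5 * π / (3 * r)), ν₁ z ≤ ψ r := by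
  intro r hr
  have hπ : (0:ℝ) < π := Real.pi_pos
  set f : ℝ → ℝ := fun z => 1 - Real.cos (r * z) with hf_def
  set a : ℝ := 5 * π / (3 * r) with ha_def
  set δ : ℝ := 2 * π / (3 * r) with hδ_def
  have ha : 0 < a := by positivity
  have haδ : 0 < a - δ := by
    have : a - δ = π / r := by rw [ha_def, hδ_def]; field_simp; ring
    rw [this]; positivity
  have haδ2 : 0 < a - 2 * δ := by
    have : a - 2 * δ = π / (3 * r) := by rw [ha_def, hδ_def]; field_simp; ring
    rw [this]; positivity
  have hf0 : ∀ z, 0 ≤ f z := fun z => by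
    simp only [hf_def]; linarith [Real.cos_le_one (r * z)]
  have hf2 : ∀ z, f z ≤ 2 := fun z => by
    simp only [hf_def]; linarith [Real.neg_one_le_cos (r * z)]
  have hfc : Continuous f := by
    simp only [hf_def]; fun_prop
  -- measurability of ν₁ on (0, ∞)
  have hmeas0 : AEMeasurable ν₁ (volume.restrict (Ioi (0:ℝ))) :=
    aemeasurable_restrict_of_antitoneOn measurableSet_Ioi
      (fun x hx y _ hxy => hmono x y hx hxy)
  have hmeas : ∀ b : ℝ, 0 < b → AEMeasurable ν₁ (volume.restrict (Ioi b)) := fun b hb =>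
    hmeas0.mono_measure (Measure.restrict_mono (Ioi_subset_Ioi hb.le) le_rfl)
  -- integrability of f * ν₁ on (0, ∞)
  have L1 : IntegrableOn (fun z => f z * ν₁ z) (Ioi (0:ℝ)) := by
    apply Integrable.mono' (hint.const_mul (max 2 (r ^ 2)))
    · exact (hfc.aemeasurable.mul hmeas0).aestronglyMeasurable
    · filter_upwards [ae_restrict_mem measurableSet_Ioi] with z hz
      have hz0 : (0:ℝ) < z := hz
      have hν : 0 ≤ ν₁ z := hnonneg z hz0
      rw [Real.norm_eq_abs, abs_of_nonneg (mul_nonneg (hf0 z) hν)]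
      have hb : f z ≤ max 2 (r ^ 2) * min 1 (z ^ 2) := by
        rcases le_total (z ^ 2) 1 with h1 | h1
        · rw [min_eq_right h1]
          have h2 := aux_one_sub_cos (r * z)
          have h3 : (r * z) ^ 2 = r ^ 2 * z ^ 2 := by ring
          have h4 : r ^ 2 * z ^ 2 ≤ max 2 (r ^ 2) * z ^ 2 :=
            mul_le_mul_of_nonneg_right (le_max_right 2 (r ^ 2)) (sq_nonneg z)
          simp only [hf_def]
          linarith [h2, h3, h4, sq_nonneg (r * z)]
        · rw [min_eq_left h1, mul_one]
          exact (hf2 z).trans (le_max_left 2 (r ^ 2))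
      calc f z * ν₁ z ≤ (max 2 (r ^ 2) * min 1 (z ^ 2)) * ν₁ z :=
            mul_le_mul_of_nonneg_right hb hν
        _ = max 2 (r ^ 2) * (min 1 (z ^ 2) * ν₁ z) := by ring
  -- integrability of ν₁ on (b, ∞) for b > 0
  have L2 : ∀ b : ℝ, 0 < b → IntegrableOn ν₁ (Ioi b) := by
    intro b hb
    have hc : (0:ℝ) < min 1 (b ^ 2) := lt_min one_pos (by positivity)
    apply Integrable.mono' ((hint.mono_set (Ioi_subset_Ioi hb.le)).const_mul (1 / min 1 (b ^ 2)))
    · exact (hmeas b hb).aestronglyMeasurable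
    · filter_upwards [ae_restrict_mem measurableSet_Ioi] with z hz
      have hzb : b < z := hz
      have hz0 : (0:ℝ) < z := hb.trans hzb
      have hν : 0 ≤ ν₁ z := hnonneg z hz0
      rw [Real.norm_eq_abs, abs_of_nonneg hν]
      have hmin : min 1 (b ^ 2) ≤ min 1 (z ^ 2) :=
        min_le_min le_rfl (by nlinarith)
      calc ν₁ z = (1 / min 1 (b ^ 2)) * (min 1 (b ^ 2) * ν₁ z) := by field_simp
        _ ≤ (1 / min 1 (b ^ 2)) * (min 1 (z ^ 2) * ν₁ z) := by
            apply mul_le_mul_of_nonneg_left (mul_le_mul_of_nonneg_right hmin hν)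
            positivity
  -- integrability of shifted products on (a, ∞)
  have L3 : ∀ t : ℝ, IntegrableOn (fun z => f (z - t) * ν₁ z) (Ioi a) := by
    intro t
    apply Integrable.mono' ((L2 a ha).const_mul 2)
    · exact (((hfc.comp (continuous_id.sub continuous_const)).aemeasurable).mul
        (hmeas a ha)).aestronglyMeasurable
    · filter_upwards [ae_restrict_mem measurableSet_Ioi] with z hz
      have hν : 0 ≤ ν₁ z := hnonneg z (ha.trans hz)
      rw [Real.norm_eq_abs, abs_of_nonneg (mul_nonneg (hf0 _) hν)]
      exact mul_le_mul_of_nonneg_right (hf2 _) hν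
  set I : ℝ := ∫ z in Ioi (0:ℝ), f z * ν₁ z with hI_def
  have hInn : 0 ≤ I :=
    setIntegral_nonneg measurableSet_Ioi fun z hz => mul_nonneg (hf0 z) (hnonneg z hz)
  -- key: shifted integrals over (a,∞) are bounded by I
  have key : ∀ t : ℝ, 0 ≤ t → 0 < a - t →
      (∫ z in Ioi a, f (z - t) * ν₁ z) ≤ I := by
    intro t ht hat
    have hsub : Ioi (a - t) ⊆ Ioi (0:ℝ) := Ioi_subset_Ioi hat.le
    have hint2 : IntegrableOn (fun z => f z * ν₁ z) (Ioi (a - t)) := L1.mono_set hsub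
    have hint3 : IntegrableOn (fun z => f (z - t) * ν₁ (z - t)) (Ioi a) :=
      aux_shift_int (fun z => f z * ν₁ z) a t hint2
    have step1 : (∫ z in Ioi a, f (z - t) * ν₁ z) ≤
        ∫ z in Ioi a, f (z - t) * ν₁ (z - t) := by
      apply setIntegral_mono_on (L3 t) hint3 measurableSet_Ioi
      intro z hz
      have hz0 : 0 < z - t := by have := mem_Ioi.mp hz; linarith
      exact mul_le_mul_of_nonneg_left (hmono (z - t) z hz0 (by linarith)) (hf0 _)
    have step2 : (∫ z in Ioi a, f (z - t) * ν₁ (z - t)) =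
        ∫ z in Ioi (a - t), f z * ν₁ z := aux_shift_eq (fun z => f z * ν₁ z) a t
    have step3 : (∫ z in Ioi (a - t), f z * ν₁ z) ≤ I := by
      apply setIntegral_mono_set L1
      · filter_upwards [ae_restrict_mem measurableSet_Ioi] with z hz
        exact mul_nonneg (hf0 z) (hnonneg z hz)
      · exact HasSubset.Subset.eventuallyLE hsub
    linarith [step2 ▸ step1]
  -- the three-cosine identity gives the sum bound
  have hrδ : r * δ = 2 * π / 3 := by rw [hδ_def]; field_simp
  have hpt : ∀ z : ℝ, f z * ν₁ z + f (z - δ) * ν₁ z + f (z - 2*δ) * ν₁ z = 3 * ν₁ z := by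
    intro z
    have h1 : r * (z - δ) = r * z - 2 * π / 3 := by rw [mul_sub, hrδ]
    have h2 : r * (z - 2*δ) = r * z - 4 * π / 3 := by
      rw [mul_sub, show r * (2 * δ) = 2 * (r * δ) by ring, hrδ]; ring
    have h3 := aux_cos3 (r * z)
    simp only [hf_def, h1, h2]
    have : (1 - Real.cos (r*z)) + (1 - Real.cos (r*z - 2*π/3)) +
        (1 - Real.cos (r*z - 4*π/3)) = 3 := by linarith
    linear_combination ν₁ z * this
  set T : ℝ := ∫ z in Ioi a, ν₁ z with hT_def
  have hTnn : 0 ≤ T :=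
    setIntegral_nonneg measurableSet_Ioi fun z hz => hnonneg z (ha.trans hz)
  have i1 : IntegrableOn (fun z => f z * ν₁ z) (Ioi a) := L1.mono_set (Ioi_subset_Ioi ha.le)
  have i2 := L3 δ
  have i3 := L3 (2*δ)
  have hsplit : 3 * T = (∫ z in Ioi a, f z * ν₁ z) + (∫ z in Ioi a, f (z - δ) * ν₁ z)
      + ∫ z in Ioi a, f (z - 2*δ) * ν₁ z := by
    rw [hT_def, ← integral_const_mul]
    rw [show (∫ z in Ioi a, 3 * ν₁ z) =
        ∫ z in Ioi a, (f z * ν₁ z + f (z - δ) * ν₁ z + f (z - 2*δ) * ν₁ z) from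
      integral_congr_ae (Filter.Eventually.of_forall fun z => (hpt z).symm)]
    have i12 : IntegrableOn (fun z => f z * ν₁ z + f (z - δ) * ν₁ z) (Ioi a) := i1.add i2
    rw [integral_add i12 i3, integral_add i1 i2]
  have k1 : (∫ z in Ioi a, f z * ν₁ z) ≤ I := by
    have := key 0 le_rfl (by simpa using ha)
    simpa using this
  have k2 : (∫ z in Ioi a, f (z - δ) * ν₁ z) ≤ I := key δ (by positivity) haδ
  have k3 : (∫ z in Ioi a, f (z - 2*δ) * ν₁ z) ≤ I := key (2*δ) (by positivity) haδ2
  rw [hψ r]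
  have hTI : T ≤ I := by linarith
  linarith
end

section
/- Let ν₁ : (0,∞) → [0,∞) be non-increasing with ∫₀^∞ min(1, z²) ν₁(z) dz < ∞ and ψ̃₀(r) = 2∫₀^∞ (1 - cos(rz)) ν₁(z) dz. Then for every r > 0, ψ̃₀(r) ≥ (1/3)·∫₀^∞ min(1, (zr)²) ν₁(z) dz. -/
open Real MeasureTheory Set

lemma key1 {v : ℝ} (h0 : 0 ≤ v) (h1 : v ≤ 1) : v ^ 3 / 18 ≤ v - Real.sin v := by
  have hb := Real.sin_bound (x := v) (by rw [abs_of_nonneg h0]; exact h1)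
  rw [abs_of_nonneg h0] at hb
  have := abs_le.mp hb
  nlinarith [this.1, this.2, pow_nonneg h0 3, pow_nonneg h0 4]

lemma sin_one_le : Real.sin 1 ≤ 85 / 96 := by
  have hb := Real.sin_bound (x := (1:ℝ)) (by norm_num)
  have := abs_le.mp hb
  norm_num at this
  linarith [this.2]

lemma sin_le_add {v : ℝ} (h1 : 1 ≤ v) : Real.sin v ≤ Real.sin 1 + (v - 1) := by
  have h := Real.sin_sub_sin v 1
  have h2 : |Real.sin ((v - 1) / 2)| ≤ |(v - 1) / 2| := Real.abs_sin_le_abs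
  have h3 : |Real.cos ((v + 1) / 2)| ≤ 1 := Real.abs_cos_le_one _
  have : |Real.sin v - Real.sin 1| ≤ v - 1 := by
    rw [h, abs_mul, abs_mul, abs_two]
    calc 2 * |Real.sin ((v - 1) / 2)| * |Real.cos ((v + 1) / 2)|
        ≤ 2 * |(v - 1) / 2| * 1 := by
          apply mul_le_mul (by linarith [abs_nonneg (Real.sin ((v-1)/2))]) h3 (abs_nonneg _)
            (by positivity)
      _ = v - 1 := by rw [abs_of_nonneg (by linarith : (0:ℝ) ≤ (v - 1) / 2)]; ring
  linarith [(abs_le.mp this).2]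

lemma key2 {v : ℝ} (h1 : 1 ≤ v) : (1 / 6) * (v - 2 / 3) ≤ v - Real.sin v := by
  rcases le_total v (16 / 15) with hv | hv
  · have := sin_le_add h1
    have := sin_one_le
    linarith
  · have := Real.sin_le_one v
    linarith

lemma cos_part (r t : ℝ) (hr : 0 < r) :
    ∫ z in (0:ℝ)..t, (1 - Real.cos (r * z)) = t - Real.sin (r * t) / r := by
  have hc : Continuous fun z : ℝ => Real.cos (r * z) := by continuity
  rw [intervalIntegral.integral_sub (intervalIntegrable_const) (hc.intervalIntegrable _ _)]
  have := intervalIntegral.integral_comp_mul_left (a := (0:ℝ)) (b := t) (fun x => Real.cos x) hr.ne'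
  rw [this]
  simp [Real.sin_zero, smul_eq_mul]
  ring

lemma min_part_small (r t : ℝ) (hr : 0 < r) (ht : 0 ≤ t) (htr : t * r ≤ 1) :
    ∫ z in (0:ℝ)..t, min 1 ((z * r) ^ 2) = r ^ 2 * t ^ 3 / 3 := by
  have hcong : ∀ z ∈ Set.uIcc (0:ℝ) t, min 1 ((z * r) ^ 2) = r ^ 2 * z ^ 2 := by
    intro z hz
    rw [Set.uIcc_of_le ht] at hz
    have hz0 : 0 ≤ z := hz.1
    have hzr0 : 0 ≤ z * r := mul_nonneg hz0 hr.le
    have hzr : z * r ≤ 1 := by nlinarith [hz.2]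
    rw [min_eq_right (by nlinarith : (z * r) ^ 2 ≤ 1)]
    ring
  rw [intervalIntegral.integral_congr hcong, intervalIntegral.integral_const_mul,
    integral_pow]
  ring

lemma min_part_big (r t : ℝ) (hr : 0 < r) (htr : 1 ≤ t * r) :
    ∫ z in (0:ℝ)..t, min 1 ((z * r) ^ 2) = 1 / (3 * r) + (t - 1 / r) := by
  have hrt : 1 / r ≤ t := by rw [div_le_iff₀ hr]; linarith
  have h0r : (0:ℝ) ≤ 1 / r := by positivity
  have hcont : Continuous fun z : ℝ => min 1 ((z * r) ^ 2) := by
    apply continuous_const.min; continuity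
  have hsplit := intervalIntegral.integral_add_adjacent_intervals
    (a := (0:ℝ)) (b := 1 / r) (c := t) (μ := volume)
    (hcont.intervalIntegrable _ _) (hcont.intervalIntegrable _ _)
  have h1 : ∫ z in (0:ℝ)..(1/r), min 1 ((z * r) ^ 2) = 1 / (3 * r) := by
    rw [min_part_small r (1/r) hr h0r (by field_simp; exact le_rfl)]
    field_simp
  have h2 : ∫ z in (1/r:ℝ)..t, min 1 ((z * r) ^ 2) = t - 1 / r := by
    have hcong : ∀ z ∈ Set.uIcc (1/r:ℝ) t, min 1 ((z * r) ^ 2) = 1 := by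
      intro z hz
      rw [Set.uIcc_of_le hrt] at hz
      have : 1 ≤ z * r := by
        rw [div_le_iff₀ hr] at hrt
        calc (1:ℝ) = (1/r) * r := by field_simp
        _ ≤ z * r := by nlinarith [hz.1]
      rw [min_eq_left (by nlinarith : (1:ℝ) ≤ (z * r) ^ 2)]
    rw [intervalIntegral.integral_congr hcong]
    simp
  rw [← hsplit, h1, h2]

lemma claimA (r : ℝ) (hr : 0 < r) (t : ℝ) (ht : 0 ≤ t) :
    0 ≤ ∫ z in (0:ℝ)..t, ((1 - Real.cos (r * z)) - (1 / 6) * min 1 ((z * r) ^ 2)) := by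
  have hc1 : Continuous fun z : ℝ => 1 - Real.cos (r * z) := by continuity
  have hc2 : Continuous fun z : ℝ => (1:ℝ)/6 * min 1 ((z * r) ^ 2) := by
    apply continuous_const.mul; apply continuous_const.min; continuity
  rw [intervalIntegral.integral_sub (hc1.intervalIntegrable _ _) (hc2.intervalIntegrable _ _),
    intervalIntegral.integral_const_mul, cos_part r t hr]
  rcases le_total (t * r) 1 with hcase | hcase
  · rw [min_part_small r t hr ht hcase]
    have := key1 (v := r * t) (by positivity) (by linarith [hcase, mul_comm t r]; )
    have h' : 0 ≤ (r * t - Real.sin (r * t) - (r * t) ^ 3 / 18) := by linarith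
    have h2 : 0 ≤ (r * t - Real.sin (r * t) - (r * t) ^ 3 / 18) / r := by positivity
    calc (0:ℝ) ≤ (r * t - Real.sin (r * t) - (r * t) ^ 3 / 18) / r := h2
      _ = t - Real.sin (r * t) / r - 1 / 6 * (r ^ 2 * t ^ 3 / 3) := by field_simp; ring
  · rw [min_part_big r t hr hcase]
    have hv : 1 ≤ r * t := by linarith [mul_comm t r]
    have := key2 hv
    have h' : 0 ≤ r * t - Real.sin (r * t) - 1 / 6 * (r * t - 2 / 3) := by linarith
    have h2 : 0 ≤ (r * t - Real.sin (r * t) - 1 / 6 * (r * t - 2 / 3)) / r := by positivity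
    calc (0:ℝ) ≤ (r * t - Real.sin (r * t) - 1 / 6 * (r * t - 2 / 3)) / r := h2
      _ = t - Real.sin (r * t) / r - 1 / 6 * (1 / (3 * r) + (t - 1 / r)) := by field_simp; ring

lemma one_sub_cos_le (u : ℝ) : 1 - Real.cos u ≤ 2 * min 1 (u ^ 2) := by
  rcases le_total (u ^ 2) 1 with hu | hu
  · rw [min_eq_right hu]
    have := Real.one_sub_sq_div_two_le_cos (x := u)
    nlinarith [sq_nonneg u]
  · rw [min_eq_left hu]
    have := Real.neg_one_le_cos u
    linarith

lemma min_scale (r z : ℝ) : min 1 ((z * r) ^ 2) ≤ max 1 (r ^ 2) * min 1 (z ^ 2) := by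
  rcases le_total (z ^ 2) 1 with hz | hz
  · rw [min_eq_right hz]
    calc min 1 ((z * r) ^ 2) ≤ (z * r) ^ 2 := min_le_right _ _
      _ = r ^ 2 * z ^ 2 := by ring
      _ ≤ max 1 (r ^ 2) * z ^ 2 := mul_le_mul_of_nonneg_right (le_max_right _ _) (sq_nonneg z)
  · rw [min_eq_left hz]
    calc min 1 ((z * r) ^ 2) ≤ 1 := min_le_left _ _
      _ ≤ max 1 (r ^ 2) := le_max_left _ _
      _ = max 1 (r ^ 2) * 1 := (mul_one _).symm

/-- Lower bound for the one-dimensional exponent by the truncated second moment. -/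
theorem stmt_5 (ν₁ : ℝ → ℝ)
    (hnonneg : ∀ z, 0 < z → 0 ≤ ν₁ z)
    (hmono : ∀ z w : ℝ, 0 < z → z ≤ w → ν₁ w ≤ ν₁ z)
    (hint : IntegrableOn (fun z => min 1 (z ^ 2) * ν₁ z) (Ioi (0 : ℝ)))
    (ψ : ℝ → ℝ)
    (hψ : ∀ r, ψ r = 2 * ∫ z in Ioi (0 : ℝ), (1 - Real.cos (r * z)) * ν₁ z) :
    ∀ r : ℝ, 0 < r →
      (1 / 3) * ∫ z in Ioi (0 : ℝ), min 1 ((z * r) ^ 2) * ν₁ z ≤ ψ r := by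
  classical
  intro r hr
  rw [hψ r]
  set μ := volume.restrict (Ioi (0:ℝ)) with hμ
  have hanti : AntitoneOn ν₁ (Ioi (0:ℝ)) := fun z hz w _ hzw => hmono z w hz hzw
  have hgmeas : AEMeasurable ν₁ μ := aemeasurable_restrict_of_antitoneOn measurableSet_Ioi hanti
  set h : ℝ → ℝ := fun z => (1 - Real.cos (r * z)) - 1 / 6 * min 1 ((z * r) ^ 2) with hh
  have hc_cos : Continuous fun z : ℝ => 1 - Real.cos (r * z) :=
    continuous_const.sub (Real.continuous_cos.comp (continuous_const.mul continuous_id))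
  have hc_min : Continuous fun z : ℝ => min 1 ((z * r) ^ 2) :=
    continuous_const.min ((continuous_id.mul continuous_const).pow 2)
  have hhcont : Continuous h := hc_cos.sub (continuous_const.mul hc_min)
  set C : ℝ := 3 * max 1 (r ^ 2) with hC
  have hmax0 : (0:ℝ) ≤ max 1 (r ^ 2) := le_trans zero_le_one (le_max_left _ _)
  have hmin0 : ∀ z : ℝ, 0 ≤ min 1 (z ^ 2) := fun z => le_min zero_le_one (sq_nonneg z)
  have hminr0 : ∀ z : ℝ, 0 ≤ min 1 ((z * r) ^ 2) := fun z => le_min zero_le_one (sq_nonneg _)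
  have hcos_le : ∀ z : ℝ, 1 - Real.cos (r * z) ≤ 2 * min 1 ((z * r) ^ 2) := by
    intro z
    have := one_sub_cos_le (r * z)
    rwa [show (r * z) ^ 2 = (z * r) ^ 2 by ring] at this
  have hcos0 : ∀ z : ℝ, 0 ≤ 1 - Real.cos (r * z) := fun z => by
    linarith [Real.cos_le_one (r * z)]
  have hbound_h : ∀ z : ℝ, |h z| ≤ C * min 1 (z ^ 2) := by
    intro z
    rw [abs_le]
    have hms := min_scale r z
    constructor
    · have : -(C * min 1 (z ^ 2)) ≤ -(1 / 6 * min 1 ((z * r) ^ 2)) := by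
        rw [neg_le_neg_iff]
        calc 1 / 6 * min 1 ((z * r) ^ 2) ≤ 1 * (max 1 (r ^ 2) * min 1 (z ^ 2)) := by
              apply mul_le_mul (by norm_num) hms (hminr0 z) zero_le_one
          _ ≤ C * min 1 (z ^ 2) := by rw [hC]; nlinarith [hmin0 z]
      simp only [hh]
      linarith [hcos0 z]
    · simp only [hh]
      calc (1 - Real.cos (r * z)) - 1 / 6 * min 1 ((z * r) ^ 2)
          ≤ 2 * min 1 ((z * r) ^ 2) := by
            have := hcos_le z
            nlinarith [hminr0 z]
        _ ≤ 2 * (max 1 (r ^ 2) * min 1 (z ^ 2)) := by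
            apply mul_le_mul_of_nonneg_left hms (by norm_num)
        _ ≤ C * min 1 (z ^ 2) := by rw [hC]; nlinarith [hmin0 z]
  have hM : IntegrableOn (fun z => C * (min 1 (z ^ 2) * ν₁ z)) (Ioi (0:ℝ)) := hint.const_mul C
  have hIntegrable : ∀ f : ℝ → ℝ, Continuous f → (∀ z : ℝ, |f z| ≤ C * min 1 (z ^ 2)) →
      IntegrableOn (fun z => f z * ν₁ z) (Ioi (0:ℝ)) := by
    intro f hf hfb
    apply Integrable.mono' hM (hf.aestronglyMeasurable.mul hgmeas.aestronglyMeasurable)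
    filter_upwards [self_mem_ae_restrict measurableSet_Ioi] with z hz
    have h0 : 0 ≤ ν₁ z := hnonneg z hz
    simp only [Pi.mul_apply]
    rw [Real.norm_eq_abs, abs_mul, abs_of_nonneg h0]
    calc |f z| * ν₁ z ≤ (C * min 1 (z ^ 2)) * ν₁ z := mul_le_mul_of_nonneg_right (hfb z) h0
      _ = C * (min 1 (z ^ 2) * ν₁ z) := by ring
  have hbound_cos : ∀ z : ℝ, |1 - Real.cos (r * z)| ≤ C * min 1 (z ^ 2) := by
    intro z
    rw [abs_of_nonneg (hcos0 z)]
    calc 1 - Real.cos (r * z) ≤ 2 * min 1 ((z * r) ^ 2) := hcos_le z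
      _ ≤ 2 * (max 1 (r ^ 2) * min 1 (z ^ 2)) :=
        mul_le_mul_of_nonneg_left (min_scale r z) (by norm_num)
      _ ≤ C * min 1 (z ^ 2) := by rw [hC]; nlinarith [hmin0 z, hmax0]
  have hbound_min : ∀ z : ℝ, |min 1 ((z * r) ^ 2)| ≤ C * min 1 (z ^ 2) := by
    intro z
    rw [abs_of_nonneg (hminr0 z)]
    calc min 1 ((z * r) ^ 2) ≤ max 1 (r ^ 2) * min 1 (z ^ 2) := min_scale r z
      _ ≤ C * min 1 (z ^ 2) := by rw [hC]; nlinarith [hmin0 z, hmax0]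
  have hInt_h : IntegrableOn (fun z => h z * ν₁ z) (Ioi (0:ℝ)) := hIntegrable h hhcont hbound_h
  have hInt_cos : IntegrableOn (fun z => (1 - Real.cos (r * z)) * ν₁ z) (Ioi (0:ℝ)) :=
    hIntegrable _ hc_cos hbound_cos
  have hInt_min : IntegrableOn (fun z => min 1 ((z * r) ^ 2) * ν₁ z) (Ioi (0:ℝ)) :=
    hIntegrable _ hc_min hbound_min
  -- slice computation
  have hslice : ∀ c a : ℝ, 0 ≤ a → ∫ s in Ioi (0:ℝ), (if s < a then c else 0) = c * a := by
    intro c a ha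
    have hind : (fun s : ℝ => if s < a then c else 0) = (Iio a).indicator (fun _ => c) := by
      funext s; simp [Set.indicator_apply, Set.mem_Iio]
    rw [hind, MeasureTheory.integral_indicator measurableSet_Iio,
      Measure.restrict_restrict measurableSet_Iio, setIntegral_const]
    rw [show Iio a ∩ Ioi (0:ℝ) = Ioo 0 a from Set.Iio_inter_Ioi]
    rw [measureReal_def, Real.volume_Ioo, smul_eq_mul]
    rw [sub_zero, ENNReal.toReal_ofReal ha, mul_comm]
  -- the double integral function
  set F : ℝ → ℝ → ℝ := fun z s => if s < ν₁ z then h z else 0 with hF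
  have hmain : 0 ≤ ∫ z in Ioi (0:ℝ), h z * ν₁ z := by
    have hFmeas : AEStronglyMeasurable (Function.uncurry F) (μ.prod μ) := by
      set g' := hgmeas.mk ν₁ with hg'
      have hg'meas : Measurable g' := hgmeas.measurable_mk
      have hgg' : ν₁ =ᵐ[μ] g' := hgmeas.ae_eq_mk
      have hF' : Measurable (fun p : ℝ × ℝ => if p.2 < g' p.1 then h p.1 else 0) := by
        exact Measurable.ite (measurableSet_lt measurable_snd (hg'meas.comp measurable_fst))
          (hhcont.measurable.comp measurable_fst) measurable_const
      refine hF'.aestronglyMeasurable.congr ?_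
      have hae : ∀ᵐ p ∂(μ.prod μ), ν₁ p.1 = g' p.1 := by
        have hnull : μ {z : ℝ | ¬ ν₁ z = g' z} = 0 := by
          simpa [Filter.EventuallyEq, ae_iff] using hgg'
        rw [ae_iff]
        exact Measure.QuasiMeasurePreserving.preimage_null
          Measure.quasiMeasurePreserving_fst hnull
      filter_upwards [hae] with p hp
      simp [Function.uncurry, hF, hp]
    have hFint : Integrable (Function.uncurry F) (μ.prod μ) := by
      rw [MeasureTheory.integrable_prod_iff hFmeas]
      constructor
      · refine Filter.Eventually.of_forall (fun z => ?_)
        have hind : (fun s => Function.uncurry F (z, s)) = (Iio (ν₁ z)).indicator (fun _ => h z) := by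
          funext s; simp [Function.uncurry, hF, Set.indicator_apply, Set.mem_Iio]
        rw [hind, integrable_indicator_iff measurableSet_Iio]
        refine (integrableOn_const_iff (C := h z)).mpr (Or.inr ?_)
        calc μ (Iio (ν₁ z)) = volume (Iio (ν₁ z) ∩ Ioi 0) :=
              Measure.restrict_apply' measurableSet_Ioi
          _ = volume (Ioo 0 (ν₁ z)) := by rw [Set.Iio_inter_Ioi]
          _ < ⊤ := by rw [Real.volume_Ioo]; exact ENNReal.ofReal_lt_top
      · have hInt_abs : IntegrableOn (fun z => |h z| * ν₁ z) (Ioi (0:ℝ)) :=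
          hIntegrable (fun z => |h z|) hhcont.abs (fun z => by
            rw [abs_abs]; exact hbound_h z)
        refine hInt_abs.congr ?_
        filter_upwards [self_mem_ae_restrict measurableSet_Ioi] with z hz
        have hnorm : (fun s => ‖Function.uncurry F (z, s)‖)
            = fun s => if s < ν₁ z then |h z| else 0 := by
          funext s
          simp only [Function.uncurry, hF]
          split <;> simp [Real.norm_eq_abs]
        rw [hnorm, hslice (|h z|) (ν₁ z) (hnonneg z hz)]
    have hswap := MeasureTheory.integral_integral_swap (μ := μ) (ν := μ) (f := F) hFint
    have hLHS : ∫ z, (∫ s, F z s ∂μ) ∂μ = ∫ z in Ioi (0:ℝ), h z * ν₁ z := by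
      refine integral_congr_ae ?_
      filter_upwards [self_mem_ae_restrict measurableSet_Ioi] with z hz
      exact hslice (h z) (ν₁ z) (hnonneg z hz)
    have hRHS : 0 ≤ ∫ s, (∫ z, F z s ∂μ) ∂μ := by
      apply integral_nonneg_of_ae
      filter_upwards [self_mem_ae_restrict measurableSet_Ioi] with s hs
      simp only [Pi.zero_apply]
      have hs' : (0:ℝ) < s := hs
      -- find z₀ with ν₁ z₀ ≤ s
      have hz₀ : ∃ z₀ : ℝ, 0 < z₀ ∧ ν₁ z₀ ≤ s := by
        by_contra hc
        push_neg at hc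
        have hconst : IntegrableOn (fun _ : ℝ => s) (Ioi (1:ℝ)) := by
          apply Integrable.mono' (hint.mono_set (Ioi_subset_Ioi (by norm_num)))
            aestronglyMeasurable_const
          filter_upwards [self_mem_ae_restrict measurableSet_Ioi] with z hz
          have hz1 : (1:ℝ) < z := hz
          have hmz : min 1 (z ^ 2) = 1 := min_eq_left (by nlinarith)
          rw [Real.norm_eq_abs, abs_of_pos hs']
          calc s ≤ ν₁ z := (hc z (by linarith)).le
            _ = min 1 (z ^ 2) * ν₁ z := by rw [hmz, one_mul]
        rcases integrable_const_iff.mp hconst with h1 | h2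
        · exact absurd h1 (ne_of_gt hs')
        · replace h2 := h2.measure_univ_lt_top; rw [Measure.restrict_apply_univ, Real.volume_Ioi] at h2
          exact absurd h2 (by simp)
      obtain ⟨z₀, hz₀pos, hz₀le⟩ := hz₀
      by_cases hS : {z : ℝ | 0 < z ∧ s < ν₁ z}.Nonempty
      · have hbdd : BddAbove {z : ℝ | 0 < z ∧ s < ν₁ z} := by
          refine ⟨z₀, fun z hz => ?_⟩
          by_contra hlt
          push_neg at hlt
          exact absurd (lt_of_lt_of_le hz.2 (hmono z₀ z hz₀pos hlt.le)) (not_lt.mpr hz₀le)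
        obtain ⟨t, htdef⟩ : ∃ t : ℝ, t = sSup {z : ℝ | 0 < z ∧ s < ν₁ z} := ⟨_, rfl⟩
        have ht_ub : ∀ z ∈ {z : ℝ | 0 < z ∧ s < ν₁ z}, z ≤ t := fun z hz =>
          htdef ▸ le_csSup hbdd hz
        obtain ⟨w, hw⟩ := id hS
        have htpos : 0 < t := lt_of_lt_of_le hw.1 (ht_ub w hw)
        have hne : ∀ᵐ z ∂μ, z ≠ t := by
          rw [ae_iff]
          have hset : {z : ℝ | ¬ z ≠ t} = {t} := by ext x; simp
          rw [hset]
          exact le_antisymm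
            ((Measure.restrict_apply_le _ _).trans_eq Real.volume_singleton) zero_le
        have heq : (fun z => F z s) =ᵐ[μ] (Ioo 0 t).indicator h := by
          filter_upwards [self_mem_ae_restrict measurableSet_Ioi, hne] with z hz hzt
          simp only [hF]
          by_cases hzS : s < ν₁ z
          · have hzmem : z ∈ Ioo 0 t :=
              ⟨hz, lt_of_le_of_ne (ht_ub z ⟨hz, hzS⟩) hzt⟩
            rw [if_pos hzS, Set.indicator_of_mem hzmem]
          · have hzmem : z ∉ Ioo 0 t := by
              intro hmem
              obtain ⟨w', hw'S, hzw'⟩ := exists_lt_of_lt_csSup hS (htdef ▸ hmem.2)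
              exact hzS (lt_of_lt_of_le hw'S.2 (hmono z w' hz hzw'.le))
            rw [if_neg hzS, Set.indicator_of_notMem hzmem]
        have hval : ∫ z, F z s ∂μ = ∫ z in (0:ℝ)..t, h z := by
          rw [integral_congr_ae heq, MeasureTheory.integral_indicator measurableSet_Ioo,
            Measure.restrict_restrict measurableSet_Ioo,
            show Ioo (0:ℝ) t ∩ Ioi 0 = Ioo 0 t from
              inter_eq_left.mpr Set.Ioo_subset_Ioi_self,
            intervalIntegral.integral_of_le htpos.le,
            ← MeasureTheory.integral_Ioc_eq_integral_Ioo]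
        calc (0:ℝ) ≤ ∫ z in (0:ℝ)..t, h z := claimA r hr t htpos.le
          _ = ∫ z, F z s ∂μ := hval.symm
      · have hzero : (fun z => F z s) =ᵐ[μ] fun _ => (0:ℝ) := by
          filter_upwards [self_mem_ae_restrict measurableSet_Ioi] with z hz
          simp only [hF]
          exact if_neg (fun hlt => hS ⟨z, hz, hlt⟩)
        have hval : ∫ z, F z s ∂μ = 0 := by
          rw [integral_congr_ae hzero]
          exact integral_zero _ _
        exact hval.ge
    rw [← hLHS, hswap]
    exact hRHS
  have hsplit : ∫ z in Ioi (0:ℝ), h z * ν₁ z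
      = (∫ z in Ioi (0:ℝ), (1 - Real.cos (r * z)) * ν₁ z)
        - 1 / 6 * ∫ z in Ioi (0:ℝ), min 1 ((z * r) ^ 2) * ν₁ z := by
    rw [← MeasureTheory.integral_const_mul,
      ← MeasureTheory.integral_sub hInt_cos (hInt_min.const_mul (1/6))]
    refine integral_congr_ae (Filter.Eventually.of_forall fun z => ?_)
    simp only [hh]
    ring
  linarith [hmain, hsplit]
end

section
/- Let ψ(x) = ⟨x, Ax⟩ + ∫(1 - cos⟨x,z⟩)ν(dz) be the characteristic exponent of a symmetric Lévy process with Gaussian matrix A and Lévy measure ν, and let ψ*(r) = sup_{|x| ≤ r} ψ(x). Then for all r ≥ 0: (1/(8(1+2d)))·(‖A‖r² + ∫min(1, (r|z|)²)ν(dz)) ≤ ψ*(r) ≤ 2·(‖A‖r² + ∫min(1, (r|z|)²)ν(dz)). -/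
open MeasureTheory Set
open scoped RealInnerProductSpace

-- aux 1: 1 - cos t ≤ 2 * min 1 (t^2)
lemma aux_cos_le (t : ℝ) : 1 - Real.cos t ≤ 2 * min 1 (t ^ 2) := by
  have h1 : Real.cos t = 1 - 2 * Real.sin (t / 2) ^ 2 := by
    have h := Real.cos_two_mul (t / 2)
    have hs := Real.sin_sq_add_cos_sq (t / 2)
    rw [show 2 * (t / 2) = t by ring] at h
    linarith
  have h2 : Real.sin (t / 2) ^ 2 ≤ (t / 2) ^ 2 := by
    have := Real.abs_sin_le_abs (x := t / 2)
    nlinarith [abs_nonneg (t/2), sq_abs (Real.sin (t/2)), sq_abs (t/2),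
      Real.abs_sin_le_abs (x := t/2), abs_nonneg (Real.sin (t/2))]
  have h3 : 1 - Real.cos t ≤ 2 := by nlinarith [Real.neg_one_le_cos t]
  have h4 : 1 - Real.cos t ≤ t ^ 2 / 2 := by nlinarith
  rcases le_total (1:ℝ) (t ^ 2) with h | h
  · rw [min_eq_left h]; linarith
  · rw [min_eq_right h]; nlinarith

-- sinc lower bound core: for 0 ≤ c, sin c ≤ c - (1/16) * c * min 1 (c^2)
lemma aux_sin_core {c : ℝ} (hc : 0 ≤ c) :
    Real.sin c ≤ c - (1/16) * c * min 1 (c ^ 2) := by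
  rcases le_total c 1 with h1 | h1
  · -- small case
    have hb := Real.sin_bound (x := c) (by rw [abs_of_nonneg hc]; exact h1)
    rw [abs_of_nonneg hc] at hb
    have hb' : Real.sin c ≤ c - c ^ 3 / 6 + c ^ 4 * (5 / 96) := by
      have := abs_le.1 hb; nlinarith [this.2, mul_le_mul_of_nonneg_left h1 (pow_nonneg hc 4)]
    have hmin : min 1 (c ^ 2) = c ^ 2 := min_eq_right (by nlinarith)
    rw [hmin]
    nlinarith [mul_le_mul_of_nonneg_left h1 (pow_nonneg hc 3)]
  · -- c ≥ 1
    have hmin : min 1 (c ^ 2) = 1 := min_eq_left (by nlinarith)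
    rw [hmin]
    -- need sin c ≤ (15/16) c
    rcases le_total (16/15 : ℝ) c with h2 | h2
    · have := Real.sin_le_one c; nlinarith
    · -- 1 ≤ c ≤ 16/15 : sin c ≤ sin 1 + (c-1) * cos 1
      have hss : Real.sin c - Real.sin 1
          = 2 * Real.sin ((c - 1)/2) * Real.cos ((c + 1)/2) := Real.sin_sub_sin c 1
      have hsin1 : Real.sin 1 ≤ 85/96 := by
        have hb := Real.sin_bound (x := 1) (by norm_num)
        have := abs_le.1 hb; norm_num at this; linarith [this.2]
      have hcos1 : Real.cos 1 ≤ 53/96 := by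
        have hb := Real.cos_bound (x := 1) (by norm_num)
        have := abs_le.1 hb; norm_num at this; linarith [this.2]
      have hcos1' : 0 ≤ Real.cos 1 := Real.cos_nonneg_of_mem_Icc
        ⟨by linarith [Real.pi_gt_three], by linarith [Real.pi_gt_three]⟩
      have hcle : Real.cos ((c + 1)/2) ≤ Real.cos 1 :=
        Real.cos_le_cos_of_nonneg_of_le_pi (by norm_num)
          (by nlinarith [Real.pi_gt_three]) (by linarith)
      have hsle : Real.sin ((c - 1)/2) ≤ (c - 1)/2 := Real.sin_le (by linarith)
      have hsnn : 0 ≤ Real.sin ((c - 1)/2) :=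
        Real.sin_nonneg_of_nonneg_of_le_pi (by linarith) (by nlinarith [Real.pi_gt_three])
      have hprod : Real.sin c - Real.sin 1 ≤ 2 * ((c - 1)/2) * Real.cos 1 := by
        rw [hss]
        have : Real.sin ((c - 1)/2) * Real.cos ((c + 1)/2) ≤ ((c - 1)/2) * Real.cos 1 := by
          calc Real.sin ((c - 1)/2) * Real.cos ((c + 1)/2)
              ≤ Real.sin ((c - 1)/2) * Real.cos 1 := by
                exact mul_le_mul_of_nonneg_left hcle hsnn
            _ ≤ ((c - 1)/2) * Real.cos 1 := mul_le_mul_of_nonneg_right hsle hcos1'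
        linarith
      nlinarith

lemma aux_sinc (c : ℝ) :
    (1/16) * min 1 (c ^ 2) ≤ ∫ t in Set.Ioc (0:ℝ) 1, (1 - Real.cos (t * c)) := by
  have hio : ∫ t in Set.Ioc (0:ℝ) 1, (1 - Real.cos (t * c))
      = ∫ t in (0:ℝ)..1, (1 - Real.cos (t * c)) :=
    (intervalIntegral.integral_of_le (by norm_num)).symm
  have hcont : Continuous fun t : ℝ => Real.cos (t * c) :=
    Real.continuous_cos.comp (continuous_id.mul continuous_const)
  have hsplit : ∫ t in (0:ℝ)..1, (1 - Real.cos (t * c))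
      = 1 - ∫ t in (0:ℝ)..1, Real.cos (t * c) := by
    rw [intervalIntegral.integral_sub intervalIntegrable_const (hcont.intervalIntegrable _ _)]
    simp
  rcases eq_or_ne c 0 with rfl | hc
  · simp [hio, hsplit]
  · have hcos : ∫ t in (0:ℝ)..1, Real.cos (t * c) = Real.sin c / c := by
      rw [intervalIntegral.integral_comp_mul_right Real.cos hc]
      simp [integral_cos, div_eq_inv_mul]
    rw [hio, hsplit, hcos]
    rcases lt_or_gt_of_ne hc with hneg | hpos
    · have h := aux_sin_core (c := -c) (by linarith)
      have habs : Real.sin c / c = Real.sin (-c) / (-c) := by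
        rw [Real.sin_neg]; field_simp
      have hsq : min 1 (c ^ 2) = min 1 ((-c) ^ 2) := by ring_nf
      rw [habs, hsq]
      have hcpos : 0 < -c := by linarith
      have : Real.sin (-c) / (-c) ≤ 1 - (1/16) * min 1 ((-c) ^ 2) := by
        rw [div_le_iff₀ hcpos]; nlinarith
      linarith
    · have h := aux_sin_core (le_of_lt hpos)
      have : Real.sin c / c ≤ 1 - (1/16) * min 1 (c ^ 2) := by
        rw [div_le_iff₀ hpos]; nlinarith
      linarith

lemma aux_min_sum {ι : Type*} (s : Finset ι) (f : ι → ℝ) (hf : ∀ i, 0 ≤ f i) :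
    min 1 (∑ i ∈ s, f i) ≤ ∑ i ∈ s, min 1 (f i) := by
  induction s using Finset.cons_induction with
  | empty => simp
  | cons a s ha ih =>
    rw [Finset.sum_cons, Finset.sum_cons]
    have h1 : min 1 (f a + ∑ i ∈ s, f i) ≤ min 1 (f a) + min 1 (∑ i ∈ s, f i) := by
      have hs : 0 ≤ ∑ i ∈ s, f i := Finset.sum_nonneg fun i _ => hf i
      rcases le_total (f a + ∑ i ∈ s, f i) 1 with h | h
      · rw [min_eq_right h, min_eq_right (by linarith [hf a]), min_eq_right (by linarith [hf a])]
      · have hle : min 1 (f a + ∑ i ∈ s, f i) ≤ 1 := min_le_left _ _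
        have hge : (1:ℝ) ≤ min 1 (f a) + min 1 (∑ i ∈ s, f i) := by
          rcases le_total (f a) 1 with h2 | h2 <;> rcases le_total (∑ i ∈ s, f i) 1 with h3 | h3
          · rw [min_eq_right h2, min_eq_right h3]; linarith
          · rw [min_eq_right h2, min_eq_left h3]; linarith [hf a]
          · rw [min_eq_left h2, min_eq_right h3]; linarith
          · rw [min_eq_left h2, min_eq_left h3]; linarith
        linarith
    linarith

lemma aux_opnorm {d : ℕ} (A : EuclideanSpace ℝ (Fin d) →L[ℝ] EuclideanSpace ℝ (Fin d))
    (hAsymm : ∀ x y, ⟪A x, y⟫ = ⟪x, A y⟫)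
    (hApos : ∀ x, 0 ≤ ⟪x, A x⟫) {m : ℝ} (hm : 0 ≤ m)
    (h : ∀ x, ⟪x, A x⟫ ≤ m * ‖x‖ ^ 2) : ‖A‖ ≤ m := by
  have key : ∀ x y : EuclideanSpace ℝ (Fin d), ⟪x, A y⟫ ^ 2 ≤ ⟪x, A x⟫ * ⟪y, A y⟫ := by
    intro x y
    have hq : ∀ t : ℝ, 0 ≤ ⟪y, A y⟫ * (t * t) + (2 * ⟪x, A y⟫) * t + ⟪x, A x⟫ := by
      intro t
      have h0 := hApos (x + t • y)
      have hyx : ⟪y, A x⟫ = ⟪x, A y⟫ := by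
        rw [← hAsymm y x, real_inner_comm]
      simp only [A.map_add, A.map_smul, inner_add_left, inner_add_right,
        real_inner_smul_left, real_inner_smul_right] at h0
      rw [hyx] at h0
      nlinarith [h0]
    have hd := discrim_le_zero hq
    rw [discrim] at hd
    nlinarith
  have hbound : ∀ x : EuclideanSpace ℝ (Fin d), ‖A x‖ ≤ Real.sqrt (m * ‖A‖) * ‖x‖ := by
    intro x
    have h1 : ⟪A x, A x⟫ = ⟪x, A (A x)⟫ := hAsymm x (A x)
    have h2 := key x (A x)
    have h3 : ⟪A x, A (A x)⟫ ≤ ‖A x‖ * (‖A‖ * ‖A x‖) := by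
      calc ⟪A x, A (A x)⟫ ≤ ‖A x‖ * ‖A (A x)‖ := real_inner_le_norm _ _
        _ ≤ ‖A x‖ * (‖A‖ * ‖A x‖) := by
            exact mul_le_mul_of_nonneg_left (A.le_opNorm (A x)) (norm_nonneg _)
    have h4 : ‖A x‖ ^ 2 = ⟪x, A (A x)⟫ := by
      rw [← h1, real_inner_self_eq_norm_sq]
    rcases eq_or_lt_of_le (norm_nonneg (A x)) with h5 | h5
    · rw [← h5]
      positivity
    · have h6 : (‖A x‖ ^ 2) ^ 2 ≤ (m * ‖x‖ ^ 2) * (‖A x‖ * (‖A‖ * ‖A x‖)) := by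
        rw [h4]
        calc ⟪x, A (A x)⟫ ^ 2 ≤ ⟪x, A x⟫ * ⟪A x, A (A x)⟫ := h2
          _ ≤ (m * ‖x‖ ^ 2) * (‖A x‖ * (‖A‖ * ‖A x‖)) := by
              exact mul_le_mul (h x) h3 (hApos (A x)) (by positivity)
      have h7 : ‖A x‖ ^ 2 ≤ m * ‖A‖ * ‖x‖ ^ 2 := by nlinarith [mul_pos h5 h5]
      have h8 : 0 ≤ m * ‖A‖ := mul_nonneg hm (norm_nonneg _)
      calc ‖A x‖ = Real.sqrt (‖A x‖ ^ 2) := by rw [Real.sqrt_sq (norm_nonneg _)]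
        _ ≤ Real.sqrt (m * ‖A‖ * ‖x‖ ^ 2) := Real.sqrt_le_sqrt h7
        _ = Real.sqrt (m * ‖A‖) * ‖x‖ := by
            rw [Real.sqrt_mul h8, Real.sqrt_sq (norm_nonneg _)]
  have h9 : ‖A‖ ≤ Real.sqrt (m * ‖A‖) :=
    A.opNorm_le_bound (Real.sqrt_nonneg _) hbound
  have h10 : ‖A‖ ^ 2 ≤ m * ‖A‖ := by
    have := Real.sq_sqrt (mul_nonneg hm (norm_nonneg A))
    nlinarith [norm_nonneg A, Real.sqrt_nonneg (m * ‖A‖)]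
  rcases eq_or_lt_of_le (norm_nonneg A) with h11 | h11
  · rw [← h11]; exact hm
  · nlinarith

lemma aux_sigmaFinite {d : ℕ} (ν : Measure (EuclideanSpace ℝ (Fin d)))
    (h0 : ν {0} = 0)
    (hint : Integrable (fun z => min 1 (‖z‖ ^ 2)) ν) : SigmaFinite ν := by
  apply Measure.FiniteSpanningSetsIn.sigmaFinite
    (C := (univ : Set (Set (EuclideanSpace ℝ (Fin d)))))
  refine ⟨fun n => {z | 1/(n+1) ≤ min 1 (‖z‖ ^ 2)} ∪ {0}, fun _ => trivial, fun n => ?_, ?_⟩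
  · refine lt_of_le_of_lt (measure_union_le _ _) ?_
    have h1 : ν {z | 1/((n:ℝ)+1) ≤ min 1 (‖z‖ ^ 2)} < ⊤ :=
      hint.measure_ge_lt_top (by positivity)
    rw [h0, add_zero]
    exact h1
  · apply eq_univ_of_forall
    intro z
    rcases eq_or_ne z 0 with rfl | hz
    · exact mem_iUnion.2 ⟨0, mem_union_right _ rfl⟩
    · have hpos : 0 < min 1 (‖z‖ ^ 2) :=
        lt_min one_pos (by have := norm_pos_iff.2 hz; positivity)
      obtain ⟨n, hn⟩ := exists_nat_one_div_lt hpos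
      exact mem_iUnion.2 ⟨n, mem_union_left _ (le_of_lt hn)⟩

/-- Two-sided bound for `ψ*(r)` in terms of `‖A‖ r² + ∫ min(1,(r|z|)²) ν(dz)`. -/
theorem stmt_8 {d : ℕ}
    (A : EuclideanSpace ℝ (Fin d) →L[ℝ] EuclideanSpace ℝ (Fin d))
    (hAsymm : ∀ x y, ⟪A x, y⟫ = ⟪x, A y⟫)
    (hApos : ∀ x, 0 ≤ ⟪x, A x⟫)
    (ν : Measure (EuclideanSpace ℝ (Fin d)))
    (h0 : ν {0} = 0)
    (hint : Integrable (fun z => min 1 (‖z‖ ^ 2)) ν)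
    (ψ : EuclideanSpace ℝ (Fin d) → ℝ)
    (hψ : ∀ x, ψ x = ⟪x, A x⟫ + ∫ z, (1 - Real.cos ⟪x, z⟫) ∂ν) :
    ∀ r : ℝ, 0 ≤ r →
      (1 / (8 * (1 + 2 * (d : ℝ)))) *
          (‖A‖ * r ^ 2 + ∫ z, min 1 ((r * ‖z‖) ^ 2) ∂ν) ≤
        sSup (ψ '' {x | ‖x‖ ≤ r}) ∧
      sSup (ψ '' {x | ‖x‖ ≤ r}) ≤
        2 * (‖A‖ * r ^ 2 + ∫ z, min 1 ((r * ‖z‖) ^ 2) ∂ν) := by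
  intro r hr
  haveI : SigmaFinite ν := aux_sigmaFinite ν h0 hint
  set S : Set ℝ := ψ '' {x | ‖x‖ ≤ r} with hS
  set I : ℝ := ∫ z, min 1 ((r * ‖z‖) ^ 2) ∂ν with hIdef
  -- pointwise cosine bound helper
  have hptw : ∀ a b : ℝ, |a| ≤ b → 1 - Real.cos a ≤ 2 * min 1 (b ^ 2) := by
    intro a b hab
    refine le_trans (aux_cos_le a) ?_
    have h1 : a ^ 2 ≤ b ^ 2 := by nlinarith [abs_nonneg a, sq_abs a]
    have h2 := min_le_min (le_refl (1:ℝ)) h1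
    linarith
  have hzj : ∀ (z : EuclideanSpace ℝ (Fin d)) (j : Fin d), |z j| ≤ ‖z‖ := by
    intro z j
    rw [EuclideanSpace.norm_eq, ← Real.sqrt_sq_eq_abs]
    apply Real.sqrt_le_sqrt
    have : z j ^ 2 = ‖z j‖ ^ 2 := by rw [Real.norm_eq_abs, sq_abs]
    rw [this]
    exact Finset.single_le_sum (f := fun i => ‖z i‖ ^ 2)
      (fun i _ => by positivity) (Finset.mem_univ j)
  have hmeas_min : AEStronglyMeasurable
      (fun z : EuclideanSpace ℝ (Fin d) => min 1 ((r * ‖z‖) ^ 2)) ν :=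
    (continuous_const.min ((continuous_const.mul continuous_norm).pow 2)).aestronglyMeasurable
  have hIr : Integrable (fun z : EuclideanSpace ℝ (Fin d) => min 1 ((r * ‖z‖) ^ 2)) ν := by
    refine (hint.const_mul (max 1 (r ^ 2))).mono' hmeas_min ?_
    filter_upwards with z
    have h1 : (0:ℝ) ≤ min 1 ((r * ‖z‖) ^ 2) := le_min one_pos.le (by positivity)
    rw [Real.norm_eq_abs, abs_of_nonneg h1]
    rcases le_total (‖z‖ ^ 2) 1 with h | h
    · rw [min_eq_right h]
      have h2 : min 1 ((r * ‖z‖) ^ 2) ≤ (r * ‖z‖) ^ 2 := min_le_right _ _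
      nlinarith [le_max_right (1:ℝ) (r ^ 2), norm_nonneg z, sq_nonneg r]
    · rw [min_eq_left h]
      have h2 : min 1 ((r * ‖z‖) ^ 2) ≤ 1 := min_le_left _ _
      nlinarith [le_max_left (1:ℝ) (r ^ 2)]
  have hIr2 := hIr.const_mul 2
  have hI0 : 0 ≤ I := integral_nonneg fun z => le_min one_pos.le (by positivity)
  have hjump_int : ∀ x : EuclideanSpace ℝ (Fin d), ‖x‖ ≤ r →
      Integrable (fun z => 1 - Real.cos ⟪x, z⟫) ν := by
    intro x hx
    refine hIr2.mono' ?_ ?_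
    · exact (continuous_const.sub
        (Real.continuous_cos.comp (innerSL ℝ x).continuous)).aestronglyMeasurable
    · filter_upwards with z
      have h1 : 0 ≤ 1 - Real.cos ⟪x, z⟫ := by linarith [Real.cos_le_one ⟪x, z⟫]
      rw [Real.norm_eq_abs, abs_of_nonneg h1]
      refine hptw _ _ ?_
      calc |⟪x, z⟫| ≤ ‖x‖ * ‖z‖ := abs_real_inner_le_norm x z
        _ ≤ r * ‖z‖ := mul_le_mul_of_nonneg_right hx (norm_nonneg z)
  have hψub : ∀ x : EuclideanSpace ℝ (Fin d), ‖x‖ ≤ r → ψ x ≤ ‖A‖ * r ^ 2 + 2 * I := by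
    intro x hx
    rw [hψ x]
    have hq : ⟪x, A x⟫ ≤ ‖A‖ * r ^ 2 := by
      calc ⟪x, A x⟫ ≤ ‖x‖ * ‖A x‖ := real_inner_le_norm _ _
        _ ≤ ‖x‖ * (‖A‖ * ‖x‖) := mul_le_mul_of_nonneg_left (A.le_opNorm x) (norm_nonneg x)
        _ ≤ ‖A‖ * r ^ 2 := by nlinarith [mul_le_mul hx hx (norm_nonneg x) hr, norm_nonneg A, norm_nonneg x]
    have hj : (∫ z, (1 - Real.cos ⟪x, z⟫) ∂ν) ≤ 2 * I := by
      have hle : (fun z : EuclideanSpace ℝ (Fin d) => 1 - Real.cos ⟪x, z⟫)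
          ≤ fun z => 2 * min 1 ((r * ‖z‖) ^ 2) := by
        intro z
        refine hptw _ _ ?_
        calc |⟪x, z⟫| ≤ ‖x‖ * ‖z‖ := abs_real_inner_le_norm x z
          _ ≤ r * ‖z‖ := mul_le_mul_of_nonneg_right hx (norm_nonneg z)
      have h3 : (∫ z, (1 - Real.cos ⟪x, z⟫) ∂ν)
          ≤ ∫ z, 2 * min 1 ((r * ‖z‖) ^ 2) ∂ν :=
        integral_mono (hjump_int x hx) hIr2 hle
      rwa [integral_const_mul] at h3
    linarith
  have hne : S.Nonempty := ⟨ψ 0, 0, by simp [hr], rfl⟩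
  have hbdd : BddAbove S := ⟨‖A‖ * r ^ 2 + 2 * I, by rintro y ⟨x, hx, rfl⟩; exact hψub x hx⟩
  have hub : sSup S ≤ ‖A‖ * r ^ 2 + 2 * I :=
    csSup_le hne (by rintro y ⟨x, hx, rfl⟩; exact hψub x hx)
  have hMge : ∀ x : EuclideanSpace ℝ (Fin d), ‖x‖ ≤ r → ψ x ≤ sSup S :=
    fun x hx => le_csSup hbdd ⟨x, hx, rfl⟩
  have hjump_nonneg : ∀ x : EuclideanSpace ℝ (Fin d),
      0 ≤ ∫ z, (1 - Real.cos ⟪x, z⟫) ∂ν :=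
    fun x => integral_nonneg fun z => by
      simp only [Pi.zero_apply]; linarith [Real.cos_le_one ⟪x, z⟫]
  have hM0 : 0 ≤ sSup S := by
    refine le_trans ?_ (hMge 0 (by simp [hr]))
    rw [hψ 0]
    have h1 : ⟪(0 : EuclideanSpace ℝ (Fin d)), A 0⟫ = 0 := inner_zero_left _
    linarith [hjump_nonneg 0]
  have hAnn : (0:ℝ) ≤ ‖A‖ * r ^ 2 := by positivity
  refine ⟨?_, by linarith⟩
  -- lower bound
  have hAr : ‖A‖ * r ^ 2 ≤ sSup S := by
    rcases eq_or_lt_of_le hr with heq | hrpos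
    · rw [← heq, show ((0:ℝ)) ^ 2 = 0 by norm_num, mul_zero]
      exact hM0
    · have hkey : ∀ x : EuclideanSpace ℝ (Fin d),
          ⟪x, A x⟫ ≤ (sSup S / r ^ 2) * ‖x‖ ^ 2 := by
        intro x
        rcases eq_or_ne x 0 with rfl | hx0
        · simp [inner_zero_left]
        · have hxn : 0 < ‖x‖ := norm_pos_iff.2 hx0
          have hyn : ‖(r / ‖x‖) • x‖ = r := by
            rw [norm_smul, Real.norm_eq_abs, abs_of_nonneg (by positivity),
              div_mul_cancel₀ _ (ne_of_gt hxn)]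
          have hyA : ⟪(r / ‖x‖) • x, A ((r / ‖x‖) • x)⟫
              = (r / ‖x‖) ^ 2 * ⟪x, A x⟫ := by
            rw [A.map_smul, real_inner_smul_left, real_inner_smul_right]; ring
          have h1 : ⟪(r / ‖x‖) • x, A ((r / ‖x‖) • x)⟫ ≤ sSup S := by
            have h2 := hMge _ (le_of_eq hyn)
            rw [hψ _] at h2
            linarith [hjump_nonneg ((r / ‖x‖) • x)]
          rw [hyA] at h1
          have hr2 : (0:ℝ) < r ^ 2 := by positivity
          have hx2 : (0:ℝ) < ‖x‖ ^ 2 := by positivity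
          calc ⟪x, A x⟫ = ((r / ‖x‖) ^ 2 * ⟪x, A x⟫) * (‖x‖ ^ 2 / r ^ 2) := by
                field_simp
            _ ≤ sSup S * (‖x‖ ^ 2 / r ^ 2) :=
                mul_le_mul_of_nonneg_right h1 (by positivity)
            _ = sSup S / r ^ 2 * ‖x‖ ^ 2 := by ring
      have hop := aux_opnorm A hAsymm hApos
        (div_nonneg hM0 (sq_nonneg r)) hkey
      have hr2 : (0:ℝ) < r ^ 2 := by positivity
      calc ‖A‖ * r ^ 2 ≤ (sSup S / r ^ 2) * r ^ 2 :=
            mul_le_mul_of_nonneg_right hop hr2.le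
        _ = sSup S := by field_simp
  -- coordinate integrability
  have hIj : ∀ j : Fin d, Integrable
      (fun z : EuclideanSpace ℝ (Fin d) => min 1 ((r * z j) ^ 2)) ν := by
    intro j
    refine hIr.mono' ?_ ?_
    · exact (continuous_const.min
        ((continuous_const.mul (EuclideanSpace.proj j).continuous).pow 2)).aestronglyMeasurable
    · filter_upwards with z
      have h1 : (0:ℝ) ≤ min 1 ((r * z j) ^ 2) := le_min one_pos.le (by positivity)
      rw [Real.norm_eq_abs, abs_of_nonneg h1]
      refine min_le_min (le_refl 1) ?_
      nlinarith [sq_nonneg r, mul_le_mul (hzj z j) (hzj z j) (abs_nonneg (z j)) (norm_nonneg z),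
        sq_abs (z j)]
  -- the key per-coordinate estimate
  have hjlem : ∀ j : Fin d,
      (1/16) * (∫ z, min 1 ((r * z j) ^ 2) ∂ν) ≤ sSup S := by
    intro j
    set μ : Measure ℝ := volume.restrict (Ioc (0:ℝ) 1) with hμ
    have hμ1 : μ univ = 1 := by
      rw [hμ, Measure.restrict_apply_univ, Real.volume_Ioc]; norm_num
    haveI : IsProbabilityMeasure μ := ⟨hμ1⟩
    have hcontj : Continuous fun z : EuclideanSpace ℝ (Fin d) => z j :=
      (EuclideanSpace.proj j).continuous
    have hFmeas : AEStronglyMeasurable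
        (fun p : ℝ × EuclideanSpace ℝ (Fin d) => 1 - Real.cos (p.1 * (r * p.2 j)))
        (μ.prod ν) := by
      refine (continuous_const.sub (Real.continuous_cos.comp ?_)).aestronglyMeasurable
      exact continuous_fst.mul (continuous_const.mul (hcontj.comp continuous_snd))
    have habs : ∀ t : ℝ, 0 ≤ t → t ≤ 1 →
        ∀ z : EuclideanSpace ℝ (Fin d), |t * (r * z j)| ≤ r * ‖z‖ := by
      intro t ht0 ht1 z
      rw [abs_mul, abs_mul, abs_of_nonneg ht0, abs_of_nonneg hr]
      nlinarith [mul_le_mul_of_nonneg_left (hzj z j) hr, mul_nonneg hr (norm_nonneg z),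
        abs_nonneg (z j)]
    have hslice : ∀ t ∈ Ioc (0:ℝ) 1,
        Integrable (fun z : EuclideanSpace ℝ (Fin d) =>
          1 - Real.cos (t * (r * z j))) ν := by
      intro t ht
      refine hIr2.mono' ?_ ?_
      · exact (continuous_const.sub (Real.continuous_cos.comp
          (continuous_const.mul (continuous_const.mul hcontj)))).aestronglyMeasurable
      · filter_upwards with z
        have h1 : 0 ≤ 1 - Real.cos (t * (r * z j)) := by
          linarith [Real.cos_le_one (t * (r * z j))]
        rw [Real.norm_eq_abs, abs_of_nonneg h1]
        exact hptw _ _ (habs t ht.1.le ht.2 z)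
    have hFint : Integrable
        (fun p : ℝ × EuclideanSpace ℝ (Fin d) => 1 - Real.cos (p.1 * (r * p.2 j)))
        (μ.prod ν) := by
      refine (integrable_prod_iff hFmeas).2 ⟨?_, ?_⟩
      · filter_upwards [ae_restrict_mem measurableSet_Ioc] with t ht
        exact hslice t ht
      · refine (integrable_const (2 * I)).mono' hFmeas.norm.integral_prod_right' ?_
        filter_upwards [ae_restrict_mem measurableSet_Ioc] with t ht
        have hnn : 0 ≤ ∫ z, ‖1 - Real.cos (t * (r * z j))‖ ∂ν :=
          integral_nonneg fun z => norm_nonneg _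
        rw [Real.norm_eq_abs, abs_of_nonneg hnn]
        have h4 : (∫ z, ‖1 - Real.cos (t * (r * z j))‖ ∂ν)
            ≤ ∫ z, 2 * min 1 ((r * ‖z‖) ^ 2) ∂ν := by
          refine integral_mono (hslice t ht).norm hIr2 fun z => ?_
          have h1 : 0 ≤ 1 - Real.cos (t * (r * z j)) := by
            linarith [Real.cos_le_one (t * (r * z j))]
          rw [Real.norm_eq_abs, abs_of_nonneg h1]
          exact hptw _ _ (habs t ht.1.le ht.2 z)
        rwa [integral_const_mul] at h4
    have hswap := MeasureTheory.integral_integral_swap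
      (f := fun (t : ℝ) (z : EuclideanSpace ℝ (Fin d)) =>
        1 - Real.cos (t * (r * z j))) hFint
    have hleft : (∫ t, (∫ z, (1 - Real.cos (t * (r * z j))) ∂ν) ∂μ) ≤ sSup S := by
      have hΦint : Integrable
          (fun t => ∫ z, (1 - Real.cos (t * (r * z j))) ∂ν) μ :=
        hFint.integral_prod_left
      have hptΦ : ∀ᵐ t ∂μ,
          (∫ z, (1 - Real.cos (t * (r * z j))) ∂ν) ≤ sSup S := by
        filter_upwards [ae_restrict_mem measurableSet_Ioc] with t ht
        have hxn : ‖EuclideanSpace.single j (t * r)‖ ≤ r := by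
          rw [EuclideanSpace.norm_single, Real.norm_eq_abs,
            abs_of_nonneg (mul_nonneg ht.1.le hr)]
          nlinarith [ht.2, hr, ht.1.le]
        have hinner : ∀ z : EuclideanSpace ℝ (Fin d),
            ⟪EuclideanSpace.single j (t * r), z⟫ = t * (r * z j) := by
          intro z
          rw [EuclideanSpace.inner_single_left]
          simp only [RCLike.star_def, conj_trivial]
          ring
        have h2 := hMge _ hxn
        rw [hψ _] at h2
        calc (∫ z, (1 - Real.cos (t * (r * z j))) ∂ν)
            = ∫ z, (1 - Real.cos ⟪EuclideanSpace.single j (t * r), z⟫) ∂ν := by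
              congr 1; funext z; rw [hinner z]
          _ ≤ sSup S := by linarith [hApos (EuclideanSpace.single j (t * r))]
      calc (∫ t, (∫ z, (1 - Real.cos (t * (r * z j))) ∂ν) ∂μ)
          ≤ ∫ _, sSup S ∂μ := integral_mono_ae hΦint (integrable_const _) hptΦ
        _ = sSup S := by simp [hμ1]
    have hright : (1/16) * (∫ z, min 1 ((r * z j) ^ 2) ∂ν)
        ≤ ∫ z, (∫ t, (1 - Real.cos (t * (r * z j))) ∂μ) ∂ν := by
      rw [← integral_const_mul]
      refine integral_mono ((hIj j).const_mul _) hFint.integral_prod_right fun z => ?_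
      exact aux_sinc (r * z j)
    calc (1/16) * (∫ z, min 1 ((r * z j) ^ 2) ∂ν)
        ≤ ∫ z, (∫ t, (1 - Real.cos (t * (r * z j))) ∂μ) ∂ν := hright
      _ = ∫ t, (∫ z, (1 - Real.cos (t * (r * z j))) ∂ν) ∂μ := hswap.symm
      _ ≤ sSup S := hleft
  -- sum over coordinates
  have hzsq : ∀ z : EuclideanSpace ℝ (Fin d),
      (r * ‖z‖) ^ 2 = ∑ i, (r * z i) ^ 2 := by
    intro z
    have h1 : ‖z‖ ^ 2 = ∑ i, z i ^ 2 := by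
      rw [EuclideanSpace.norm_eq, Real.sq_sqrt (by positivity)]
      refine Finset.sum_congr rfl fun i _ => by rw [Real.norm_eq_abs, sq_abs]
    rw [mul_pow, h1, Finset.mul_sum]
    refine Finset.sum_congr rfl fun i _ => by ring
  have hsum : (1/16) * I ≤ (d:ℝ) * sSup S := by
    have h1 : I ≤ ∑ j : Fin d, ∫ z, min 1 ((r * z j) ^ 2) ∂ν := by
      rw [← integral_finset_sum _ fun j _ => hIj j]
      refine integral_mono hIr (integrable_finset_sum _ fun j _ => hIj j) fun z => ?_
      calc min 1 ((r * ‖z‖) ^ 2) = min 1 (∑ i, (r * z i) ^ 2) := by rw [hzsq z]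
        _ ≤ ∑ i, min 1 ((r * z i) ^ 2) := aux_min_sum _ _ fun i => sq_nonneg _
    have h2 : ∑ j : Fin d, (1/16) * (∫ z, min 1 ((r * z j) ^ 2) ∂ν)
        ≤ ∑ _j : Fin d, sSup S := Finset.sum_le_sum fun j _ => hjlem j
    rw [Finset.sum_const, Finset.card_univ, Fintype.card_fin, ← Finset.mul_sum] at h2
    have h3 := mul_le_mul_of_nonneg_left h1 (by norm_num : (0:ℝ) ≤ 1/16)
    calc (1/16) * I ≤ (1/16) * ∑ j : Fin d, ∫ z, min 1 ((r * z j) ^ 2) ∂ν := h3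
      _ ≤ d • sSup S := h2
      _ = (d:ℝ) * sSup S := by rw [nsmul_eq_mul]
  have h8 : (0:ℝ) < 8 * (1 + 2 * (d:ℝ)) := by positivity
  have hX : ‖A‖ * r ^ 2 + I ≤ sSup S * (8 * (1 + 2 * (d:ℝ))) := by
    nlinarith [hAr, hsum, hM0, hI0, (Nat.cast_nonneg d : (0:ℝ) ≤ (d:ℝ))]
  calc (1 / (8 * (1 + 2 * (d:ℝ)))) * (‖A‖ * r ^ 2 + I)
      = (‖A‖ * r ^ 2 + I) / (8 * (1 + 2 * (d:ℝ))) := by ring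
    _ ≤ sSup S := by rw [div_le_iff₀ h8]; exact hX
end

section
/- Let ψ : ℝ^d → [0,∞) be a measurable function with ψ(x) > 0 for x ≠ 0 such that, for some C* ≥ 1, C*^{-1}·ψ*(|x|) ≤ ψ(x) ≤ ψ*(|x|) where ψ*(r) = sup_{|y| ≤ r}ψ(y), and ψ* satisfies the doubling-type scaling (1/2)(s²/(s²+1))ψ*(r) ≤ ψ*(sr) ≤ 2(1+s²)ψ*(r) for s,r > 0. Define F(λ) = ∫_{ℝ^d} e^{-|x|²/4} / ψ(√λ · x) dx for λ > 0. Then there exist constants c₁, c₂ > 0 depending only on d and C* such that c₁/ψ*(√λ) ≤ F(λ) ≤ c₂/ψ*(√λ) for all λ > 0. -/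
open MeasureTheory Set

open Real

lemma int1d : Integrable (fun t : ℝ => |t| ^ (-(2/3) : ℝ) * Real.exp (-(4⁻¹) * t ^ 2)) := by
  set g : ℝ → ℝ := fun t => |t| ^ (-(2/3) : ℝ) * Real.exp (-(4⁻¹) * t ^ 2) with hg
  have hIoi : IntegrableOn g (Ioi 0) := by
    have h := integrableOn_rpow_mul_exp_neg_mul_sq (b := 4⁻¹) (by norm_num) (s := -(2/3)) (by norm_num)
    exact h.congr_fun (fun t ht => by rw [hg]; simp [abs_of_pos (mem_Ioi.mp ht)]) measurableSet_Ioi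
  have h_map : (volume.restrict (Ioi (0:ℝ))).map Neg.neg = volume.restrict (Iio (0:ℝ)) := by
    conv => rhs; rw [← Measure.map_neg_eq_self (volume : Measure ℝ), measurableEmbedding_neg.restrict_map]
    simp
  have hIio : IntegrableOn g (Iio 0) := by
    rw [IntegrableOn, ← h_map, measurableEmbedding_neg.integrable_map_iff]
    have : g ∘ Neg.neg = g := by funext t; simp [hg]
    rw [this]; exact hIoi
  have h0 : IntegrableOn g {(0:ℝ)} := by
    rw [IntegrableOn, Measure.restrict_eq_zero.mpr (measure_singleton 0)]
    exact integrable_zero_measure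
  rw [← integrableOn_univ, ← Iio_union_Ici (a := (0:ℝ)), integrableOn_union,
    ← Ioi_union_left (a := (0:ℝ)), integrableOn_union ]
  exact ⟨hIio, hIoi, h0⟩

lemma aux_prod_int {d : ℕ} (g : Fin d → ℝ → ℝ)
    (hgi : ∀ i, Integrable (fun t : ℝ => g i t * Real.exp (-(4⁻¹) * t ^ 2))) :
    Integrable (fun x : EuclideanSpace ℝ (Fin d) =>
      (∏ i, g i (x i)) * Real.exp (-‖x‖ ^ 2 / 4)) := by
  have h1 : Integrable (fun v : Fin d → ℝ =>
      ∏ i, (g i (v i) * Real.exp (-(4⁻¹) * (v i) ^ 2))) :=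
    Integrable.fintype_prod (f := fun i t => g i t * Real.exp (-(4⁻¹) * t ^ 2)) hgi
  have hmp := (EuclideanSpace.volume_preserving_symm_measurableEquiv_toLp (Fin d)).symm
  rw [← MeasurePreserving.integrable_comp_emb hmp (MeasurableEquiv.measurableEmbedding _)]
  convert h1 using 2 with v
  · rfl
  have hcoord : ∀ i, ((MeasurableEquiv.toLp 2 (Fin d → ℝ)).symm.symm v) i = v i := by
    intro i
    rfl
  have hnorm : ‖(MeasurableEquiv.toLp 2 (Fin d → ℝ)).symm.symm v‖ ^ 2 = ∑ i, (v i) ^ 2 := by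
    rw [EuclideanSpace.norm_eq, Real.sq_sqrt (by positivity)]
    simp [hcoord, sq_abs]
  simp only [Function.comp_apply, hcoord, hnorm, Finset.prod_mul_distrib]
  rw [← Real.exp_sum]
  congr 1
  rw [neg_div, Finset.sum_div, ← Finset.sum_neg_distrib]
  congr 1
  apply Finset.sum_congr rfl
  intro i _
  ring

lemma amgm_bound {d : ℕ} (hd : 3 ≤ d) (x : EuclideanSpace ℝ (Fin d))
    (hi : ∀ i : Fin d, (i : ℕ) < 3 → x i ≠ 0) :
    (‖x‖ ^ 2)⁻¹ ≤ 3⁻¹ * ∏ i : Fin d, (if (i : ℕ) < 3 then |x i| ^ (-(2/3) : ℝ) else 1) := by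
  set i0 : Fin d := ⟨0, by omega⟩
  set i1 : Fin d := ⟨1, by omega⟩
  set i2 : Fin d := ⟨2, by omega⟩
  set a := |x i0| with ha_def
  set b := |x i1| with hb_def
  set c := |x i2| with hc_def
  have ha : 0 < a := abs_pos.mpr (hi i0 (by simp [i0]))
  have hb : 0 < b := abs_pos.mpr (hi i1 (by simp [i1]))
  have hc : 0 < c := abs_pos.mpr (hi i2 (by simp [i2]))
  have h01 : i0 ≠ i1 := by simp [i0, i1, Fin.ext_iff]
  have h02 : i0 ≠ i2 := by simp [i0, i2, Fin.ext_iff]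
  have h12 : i1 ≠ i2 := by simp [i1, i2, Fin.ext_iff]
  -- the product equals (a^(2/3) * b^(2/3) * c^(2/3))⁻¹
  have hfs : Finset.univ.filter (fun i : Fin d => (i : ℕ) < 3) = {i0, i1, i2} := by
    ext i
    simp only [Finset.mem_filter, Finset.mem_univ, true_and, Finset.mem_insert,
      Finset.mem_singleton, Fin.ext_iff, i0, i1, i2]
    constructor
    · intro h; omega
    · rintro (h | h | h) <;> omega
  have hprod : (∏ i : Fin d, (if (i : ℕ) < 3 then |x i| ^ (-(2/3) : ℝ) else 1))
      = a ^ (-(2/3) : ℝ) * b ^ (-(2/3) : ℝ) * c ^ (-(2/3) : ℝ) := by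
    rw [← Finset.prod_filter, hfs, Finset.prod_insert (by simp [h01, h02]),
      Finset.prod_insert (by simp [h12]), Finset.prod_singleton, mul_assoc]
  have hQ : a ^ (-(2/3) : ℝ) * b ^ (-(2/3) : ℝ) * c ^ (-(2/3) : ℝ)
      = (a ^ ((2:ℝ)/3) * b ^ ((2:ℝ)/3) * c ^ ((2:ℝ)/3))⁻¹ := by
    rw [Real.rpow_neg ha.le, Real.rpow_neg hb.le, Real.rpow_neg hc.le, mul_inv, mul_inv]
  -- AM-GM
  have hre : ∀ t : ℝ, (t ^ 2) ^ ((1:ℝ)/3) = |t| ^ ((2:ℝ)/3) := by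
    intro t
    rw [← sq_abs, ← Real.rpow_natCast |t| 2, ← Real.rpow_mul (abs_nonneg t)]
    norm_num
  have hgm := Real.geom_mean_le_arith_mean3_weighted (by norm_num : (0:ℝ) ≤ 1/3)
    (by norm_num : (0:ℝ) ≤ 1/3) (by norm_num : (0:ℝ) ≤ 1/3)
    (sq_nonneg (x i0)) (sq_nonneg (x i1)) (sq_nonneg (x i2)) (by norm_num)
  rw [hre, hre, hre] at hgm
  -- sum over subset
  have hsum : (x i0) ^ 2 + (x i1) ^ 2 + (x i2) ^ 2 ≤ ‖x‖ ^ 2 := by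
    have hns : ‖x‖ ^ 2 = ∑ i, (x i) ^ 2 := by
      rw [EuclideanSpace.norm_eq, Real.sq_sqrt (by positivity)]
      simp [Real.norm_eq_abs, sq_abs]
    have : ∑ i ∈ ({i0, i1, i2} : Finset (Fin d)), (x i) ^ 2 ≤ ∑ i, (x i) ^ 2 :=
      Finset.sum_le_sum_of_subset_of_nonneg (Finset.subset_univ _)
        (fun i _ _ => sq_nonneg _)
    rw [Finset.sum_insert (by simp [h01, h02]), Finset.sum_insert (by simp [h12]),
      Finset.sum_singleton] at this
    linarith [hns ▸ this]
  rw [hprod, hQ]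
  set Q := a ^ ((2:ℝ)/3) * b ^ ((2:ℝ)/3) * c ^ ((2:ℝ)/3) with hQdef
  have hQpos : 0 < Q := by positivity
  have habs : a ^ 2 = (x i0)^2 := by rw [ha_def, sq_abs]
  have hbabs : b ^ 2 = (x i1)^2 := by rw [hb_def, sq_abs]
  have hcabs : c ^ 2 = (x i2)^2 := by rw [hc_def, sq_abs]
  have h3Q : 3 * Q ≤ ‖x‖ ^ 2 := by
    have : Q ≤ 1/3 * (x i0)^2 + 1/3 * (x i1)^2 + 1/3 * (x i2)^2 := hgm
    nlinarith
  have hxpos : 0 < ‖x‖ ^ 2 := lt_of_lt_of_le (by positivity) h3Q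
  rw [← mul_inv]
  exact inv_anti₀ (by positivity) (by linarith)

/-- Core Gaussian-integral computation in the Laplace transform estimate of the
potential of balls: `F(λ) ≍ 1/ψ*(√λ)`. -/
theorem stmt_12 {d : ℕ} (hd : 3 ≤ d)
    (ψ : EuclideanSpace ℝ (Fin d) → ℝ)
    (hmeas : Measurable ψ)
    (hpos : ∀ x, x ≠ 0 → 0 < ψ x)
    (ψstar : ℝ → ℝ)
    (hψstar : ∀ r, ψstar r = sSup (ψ '' {x | ‖x‖ ≤ r}))
    (Cstar : ℝ) (hCstar : 1 ≤ Cstar)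
    (hcomp : ∀ x, Cstar⁻¹ * ψstar ‖x‖ ≤ ψ x ∧ ψ x ≤ ψstar ‖x‖)
    (hscale : ∀ s r : ℝ, 0 < s → 0 < r →
      (1 / 2) * (s ^ 2 / (s ^ 2 + 1)) * ψstar r ≤ ψstar (s * r) ∧
      ψstar (s * r) ≤ 2 * (1 + s ^ 2) * ψstar r)
    (F : ℝ → ℝ)
    (hF : ∀ lam : ℝ, 0 < lam →
      F lam = ∫ x : EuclideanSpace ℝ (Fin d),
        Real.exp (-‖x‖ ^ 2 / 4) / ψ (Real.sqrt lam • x)) :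
    ∃ c₁ c₂ : ℝ, 0 < c₁ ∧ 0 < c₂ ∧ ∀ lam : ℝ, 0 < lam →
      c₁ / ψstar (Real.sqrt lam) ≤ F lam ∧ F lam ≤ c₂ / ψstar (Real.sqrt lam) := by
  have hCpos : (0:ℝ) < Cstar := lt_of_lt_of_le one_pos hCstar
  -- integrable building blocks
  have hWint : Integrable (fun x : EuclideanSpace ℝ (Fin d) =>
      (∏ i : Fin d, (if (i : ℕ) < 3 then |x i| ^ (-(2/3) : ℝ) else 1)) *
        Real.exp (-‖x‖ ^ 2 / 4)) := by
    refine aux_prod_int (fun i t => if (i : ℕ) < 3 then |t| ^ (-(2/3) : ℝ) else 1) ?_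
    intro i
    by_cases h : (i : ℕ) < 3
    · simpa [h] using int1d
    · simpa [h] using integrable_exp_neg_mul_sq (by norm_num : (0:ℝ) < 4⁻¹)
  have hGint : Integrable (fun x : EuclideanSpace ℝ (Fin d) => Real.exp (-‖x‖ ^ 2 / 4)) := by
    have := aux_prod_int (fun (_ : Fin d) (_ : ℝ) => 1)
      (fun i => by simpa using integrable_exp_neg_mul_sq (by norm_num : (0:ℝ) < 4⁻¹))
    simpa using this
  set L : EuclideanSpace ℝ (Fin d) → ℝ :=
    fun x => Real.exp (-‖x‖ ^ 2 / 4) * (2 * (1 + ‖x‖ ^ 2))⁻¹ with hLdef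
  set M : EuclideanSpace ℝ (Fin d) → ℝ :=
    fun x => 2 * Cstar * Real.exp (-‖x‖ ^ 2 / 4) + 2 * Cstar * 3⁻¹ *
      ((∏ i : Fin d, (if (i : ℕ) < 3 then |x i| ^ (-(2/3) : ℝ) else 1)) *
        Real.exp (-‖x‖ ^ 2 / 4)) with hMdef
  have hLcont : Continuous L := by
    rw [hLdef]
    apply Continuous.mul (by fun_prop)
    exact Continuous.inv₀ (by fun_prop) (fun x => by positivity)
  have hLint : Integrable L := by
    apply hGint.mono' hLcont.aestronglyMeasurable
    filter_upwards with x
    rw [hLdef, Real.norm_eq_abs, abs_of_nonneg (by positivity)]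
    calc Real.exp (-‖x‖ ^ 2 / 4) * (2 * (1 + ‖x‖ ^ 2))⁻¹
        ≤ Real.exp (-‖x‖ ^ 2 / 4) * 1 := by
          apply mul_le_mul_of_nonneg_left _ (Real.exp_pos _).le
          rw [inv_le_one_iff₀]
          right; nlinarith [sq_nonneg ‖x‖]
      _ = Real.exp (-‖x‖ ^ 2 / 4) := mul_one _
  have hLpos : 0 < ∫ x, L x := by
    rw [integral_pos_iff_support_of_nonneg (fun x => by rw [hLdef]; positivity) hLint]
    have : Function.support L = univ := by
      apply eq_univ_of_forall
      intro x
      have : 0 < L x := by rw [hLdef]; positivity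
      exact this.ne'
    rw [this]
    exact lt_of_lt_of_le (Metric.measure_ball_pos volume (0 : EuclideanSpace ℝ (Fin d)) one_pos)
      (measure_mono (subset_univ _))
  have hMint : Integrable M := by
    rw [hMdef]
    exact (hGint.const_mul (2 * Cstar)).add (hWint.const_mul (2 * Cstar * 3⁻¹))
  have hMnonneg : ∀ x, 0 ≤ M x := by
    intro x
    have hP : 0 ≤ ∏ i : Fin d, (if (i : ℕ) < 3 then |x i| ^ (-(2/3) : ℝ) else 1) :=
      Finset.prod_nonneg (fun i _ => by split <;> positivity)
    rw [hMdef]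
    positivity
  -- a.e. all first three coordinates nonzero
  have hnull : ∀ i : Fin d, volume {x : EuclideanSpace ℝ (Fin d) | x i = 0} = 0 := by
    intro i
    have heq : {x : EuclideanSpace ℝ (Fin d) | x i = 0} =
        (LinearMap.ker ((EuclideanSpace.proj i :
          EuclideanSpace ℝ (Fin d) →L[ℝ] ℝ) : EuclideanSpace ℝ (Fin d) →ₗ[ℝ] ℝ) : Set _) := by
      ext x
      simp [LinearMap.mem_ker]
    rw [heq]
    apply Measure.addHaar_submodule
    intro htop
    have h0 : (EuclideanSpace.proj i : EuclideanSpace ℝ (Fin d) →L[ℝ] ℝ)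
        (EuclideanSpace.single i (1:ℝ)) = 0 := by
      have := LinearMap.ker_eq_top.mp htop
      calc (EuclideanSpace.proj i : EuclideanSpace ℝ (Fin d) →L[ℝ] ℝ)
            (EuclideanSpace.single i (1:ℝ))
          = ((EuclideanSpace.proj i : EuclideanSpace ℝ (Fin d) →L[ℝ] ℝ) :
              EuclideanSpace ℝ (Fin d) →ₗ[ℝ] ℝ) (EuclideanSpace.single i (1:ℝ)) := rfl
        _ = 0 := by rw [this]; rfl
    simp at h0
  have hae : ∀ᵐ x : EuclideanSpace ℝ (Fin d), ∀ i : Fin d, (i : ℕ) < 3 → x i ≠ 0 := by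
    rw [ae_all_iff]
    intro i
    have h1 : ∀ᵐ x : EuclideanSpace ℝ (Fin d), x i ≠ 0 := by
      rw [ae_iff]
      simpa using hnull i
    exact h1.mono fun x hx _ => hx
  refine ⟨∫ x, L x, (∫ x, M x) + 1, hLpos, by have h : 0 ≤ ∫ x, M x := integral_nonneg hMnonneg; linarith, ?_⟩
  intro lam hlam
  have hr : 0 < Real.sqrt lam := Real.sqrt_pos.mpr hlam
  set r := Real.sqrt lam with hrdef
  -- ψstar r > 0
  have hψr : 0 < ψstar r := by
    set x₀ : EuclideanSpace ℝ (Fin d) := EuclideanSpace.single (⟨0, by omega⟩ : Fin d) (1:ℝ)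
      with hx₀def
    have hnx₀ : ‖r • x₀‖ = r := by
      rw [norm_smul, hx₀def, EuclideanSpace.norm_single, Real.norm_eq_abs, abs_of_pos hr,
        norm_one, mul_one]
    have hne : r • x₀ ≠ 0 := by
      intro h
      rw [h, norm_zero] at hnx₀
      exact hr.ne' hnx₀.symm
    calc (0:ℝ) < ψ (r • x₀) := hpos _ hne
      _ ≤ ψstar ‖r • x₀‖ := (hcomp _).2
      _ = ψstar r := by rw [hnx₀]
  have hψrne : ψstar r ≠ 0 := hψr.ne'
  set f : EuclideanSpace ℝ (Fin d) → ℝ :=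
    fun x => Real.exp (-‖x‖ ^ 2 / 4) / ψ (r • x) with hfdef
  have hfmeas : AEStronglyMeasurable f volume := by
    apply Measurable.aestronglyMeasurable
    rw [hfdef]
    exact (Continuous.measurable (by fun_prop)).div (hmeas.comp (measurable_const_smul r))
  have key : ∀ x : EuclideanSpace ℝ (Fin d), (∀ i : Fin d, (i : ℕ) < 3 → x i ≠ 0) →
      (ψstar r)⁻¹ * L x ≤ f x ∧ f x ≤ (ψstar r)⁻¹ * M x ∧ 0 ≤ f x := by
    intro x hx
    have hx0 : x ≠ 0 := by
      intro h
      exact hx ⟨0, by omega⟩ (by simp) (by rw [h]; rfl)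
    have hs : 0 < ‖x‖ := norm_pos_iff.mpr hx0
    have hsne : ‖x‖ ≠ 0 := hs.ne'
    have hy : r • x ≠ 0 := smul_ne_zero hr.ne' hx0
    have hny : ‖r • x‖ = ‖x‖ * r := by
      rw [norm_smul, Real.norm_eq_abs, abs_of_pos hr, mul_comm]
    have hψy : 0 < ψ (r • x) := hpos _ hy
    have hub : ψ (r • x) ≤ 2 * (1 + ‖x‖ ^ 2) * ψstar r := by
      refine le_trans (hcomp (r • x)).2 ?_
      rw [hny]
      exact (hscale ‖x‖ r hs hr).2
    have hlb : Cstar⁻¹ * ((1/2) * (‖x‖ ^ 2 / (‖x‖ ^ 2 + 1)) * ψstar r) ≤ ψ (r • x) := by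
      refine le_trans ?_ (hcomp (r • x)).1
      rw [hny]
      exact mul_le_mul_of_nonneg_left (hscale ‖x‖ r hs hr).1 (by positivity)
    have hexp : (0:ℝ) ≤ Real.exp (-‖x‖ ^ 2 / 4) := (Real.exp_pos _).le
    refine ⟨?_, ?_, div_nonneg hexp hψy.le⟩
    · have h1 : Real.exp (-‖x‖ ^ 2 / 4) / (2 * (1 + ‖x‖ ^ 2) * ψstar r) ≤ f x :=
        div_le_div_of_nonneg_left hexp hψy hub
      refine le_trans (le_of_eq ?_) h1
      rw [hLdef]
      field_simp
    · have hD : 0 < Cstar⁻¹ * ((1/2) * (‖x‖ ^ 2 / (‖x‖ ^ 2 + 1)) * ψstar r) := by positivity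
      have h1 : f x ≤ Real.exp (-‖x‖ ^ 2 / 4) /
          (Cstar⁻¹ * ((1/2) * (‖x‖ ^ 2 / (‖x‖ ^ 2 + 1)) * ψstar r)) :=
        div_le_div_of_nonneg_left hexp hD hlb
      refine le_trans h1 ?_
      have hCne : Cstar ≠ 0 := hCpos.ne'
      have heq : Real.exp (-‖x‖ ^ 2 / 4) /
          (Cstar⁻¹ * ((1/2) * (‖x‖ ^ 2 / (‖x‖ ^ 2 + 1)) * ψstar r))
          = (ψstar r)⁻¹ * (2 * Cstar * Real.exp (-‖x‖ ^ 2 / 4) +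
              2 * Cstar * Real.exp (-‖x‖ ^ 2 / 4) * (‖x‖ ^ 2)⁻¹) := by
        field_simp
      rw [heq, hMdef]
      apply mul_le_mul_of_nonneg_left _ (inv_nonneg.mpr hψr.le)
      have hA := amgm_bound hd x hx
      have hP : 0 ≤ ∏ i : Fin d, (if (i : ℕ) < 3 then |x i| ^ (-(2/3) : ℝ) else 1) :=
        Finset.prod_nonneg (fun i _ => by split <;> positivity)
      have h2 : 2 * Cstar * Real.exp (-‖x‖ ^ 2 / 4) * (‖x‖ ^ 2)⁻¹ ≤
          2 * Cstar * 3⁻¹ *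
            ((∏ i : Fin d, (if (i : ℕ) < 3 then |x i| ^ (-(2/3) : ℝ) else 1)) *
              Real.exp (-‖x‖ ^ 2 / 4)) := by
        nlinarith [mul_le_mul_of_nonneg_left hA
          (by positivity : (0:ℝ) ≤ 2 * Cstar * Real.exp (-‖x‖ ^ 2 / 4))]
      linarith
  have hfint : Integrable f := by
    apply (hMint.const_mul ((ψstar r)⁻¹)).mono' hfmeas
    filter_upwards [hae] with x hx
    rw [Real.norm_eq_abs, abs_of_nonneg (key x hx).2.2]
    exact (key x hx).2.1
  rw [hF lam hlam, ← hrdef]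
  constructor
  · calc (∫ x, L x) / ψstar r = ∫ x, (ψstar r)⁻¹ * L x := by
          rw [integral_const_mul, div_eq_mul_inv, mul_comm]
      _ ≤ ∫ x, f x := integral_mono_ae (hLint.const_mul _) hfint
          (hae.mono fun x hx => (key x hx).1)
  · calc (∫ x, f x) ≤ ∫ x, (ψstar r)⁻¹ * M x := integral_mono_ae hfint (hMint.const_mul _)
          (hae.mono fun x hx => (key x hx).2.1)
      _ = (∫ x, M x) / ψstar r := by rw [integral_const_mul, div_eq_mul_inv, mul_comm]
      _ ≤ ((∫ x, M x) + 1) / ψstar r := by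
          apply (div_le_div_iff_of_pos_right hψr).mpr
          linarith
end

section
/- Let G : ℝ^d → [0,∞] be radially non-increasing and suppose g(r) := ∫_{B(0,r)}G(y)dy satisfies c₁/ψ*(1/r) ≤ g(r) ≤ c₂/ψ*(1/r) for r ≤ R, where ψ* : (0,∞) → (0,∞) satisfies WLSC(β, 1/R, C*) (ψ*(λu) ≥ C*λ^β ψ*(u) for λ ≥ 1, u ≥ 1/R). Then there exist b ∈ (0,1) and C₅ > 0, depending only on d, β, C*, c₁, c₂, such that G(x) ≥ C₅/(|x|^d·ψ*(1/|x|)) for 0 < |x| ≤ bR. -/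
open MeasureTheory Set Metric
open scoped ENNReal

/-- Lower potential-kernel bound under the weak lower scaling condition:
`G(x) ≥ C₅/(|x|^d ψ*(1/|x|))` for `|x| ≤ bR`. -/
theorem stmt_15 {d : ℕ} (G : EuclideanSpace ℝ (Fin d) → ℝ≥0∞)
    (hradial : ∀ x y : EuclideanSpace ℝ (Fin d), ‖x‖ ≤ ‖y‖ → G y ≤ G x)
    (ψstar : ℝ → ℝ) (hψpos : ∀ r : ℝ, 0 < r → 0 < ψstar r)
    (R β Cstar c₁ c₂ : ℝ) (hR : 0 < R) (hβ : 0 < β) (hCstar : 0 < Cstar)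
    (hc₁ : 0 < c₁) (hc₂ : 0 < c₂)
    (hwlsc : ∀ lam u : ℝ, 1 ≤ lam → 1 / R ≤ u →
      Cstar * lam ^ β * ψstar u ≤ ψstar (lam * u))
    (hbound : ∀ r : ℝ, 0 < r → r ≤ R →
      ENNReal.ofReal (c₁ / ψstar (1 / r)) ≤
        (∫⁻ y in ball (0 : EuclideanSpace ℝ (Fin d)) r, G y) ∧
      (∫⁻ y in ball (0 : EuclideanSpace ℝ (Fin d)) r, G y) ≤
        ENNReal.ofReal (c₂ / ψstar (1 / r))) :
    ∃ b C₅ : ℝ, 0 < b ∧ b < 1 ∧ 0 < C₅ ∧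
      ∀ x : EuclideanSpace ℝ (Fin d), x ≠ 0 → ‖x‖ ≤ b * R →
        ENNReal.ofReal (C₅ / (‖x‖ ^ d * ψstar (1 / ‖x‖))) ≤ G x := by
  classical
  set κ : ℝ := max 2 ((2 * c₂ / (c₁ * Cstar)) ^ (1 / β)) with hκdef
  have hκ2 : (2:ℝ) ≤ κ := le_max_left _ _
  have hκ1 : (1:ℝ) < κ := lt_of_lt_of_le one_lt_two hκ2
  have hκpos : (0:ℝ) < κ := lt_trans one_pos hκ1
  have hapos : 0 < 2 * c₂ / (c₁ * Cstar) := by positivity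
  have hκβ : 2 * c₂ / (c₁ * Cstar) ≤ κ ^ β := by
    have h1 : ((2 * c₂ / (c₁ * Cstar)) ^ (1 / β)) ^ β = 2 * c₂ / (c₁ * Cstar) := by
      rw [← Real.rpow_mul hapos.le, one_div, inv_mul_cancel₀ hβ.ne', Real.rpow_one]
    have hκa : (2 * c₂ / (c₁ * Cstar)) ^ (1 / β) ≤ κ := le_max_right _ _
    have h2 := Real.rpow_le_rpow (Real.rpow_nonneg hapos.le (1 / β)) hκa hβ.le
    rwa [h1] at h2
  have hA : c₂ ≤ c₁ * Cstar * κ ^ β - c₂ := by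
    have h := mul_le_mul_of_nonneg_left hκβ (by positivity : (0:ℝ) ≤ c₁ * Cstar)
    have heq : c₁ * Cstar * (2 * c₂ / (c₁ * Cstar)) = 2 * c₂ := by field_simp
    nlinarith
  set A : ℝ := c₁ * Cstar * κ ^ β - c₂ with hAdef
  have hApos : 0 < A := lt_of_lt_of_le hc₂ hA
  set v : ℝ := (volume (ball (0 : EuclideanSpace ℝ (Fin d)) 1)).toReal with hvdef
  have hv : 0 < v :=
    ENNReal.toReal_pos (measure_ball_pos _ _ one_pos).ne' measure_ball_lt_top.ne
  refine ⟨1/κ, A / (κ ^ d * v), by positivity, by rw [div_lt_one hκpos]; exact hκ1,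
    by positivity, ?_⟩
  intro x hx hxb
  haveI : Nontrivial (EuclideanSpace ℝ (Fin d)) := nontrivial_of_ne x 0 hx
  set r : ℝ := ‖x‖ with hrdef
  have hr : 0 < r := norm_pos_iff.mpr hx
  have hκr : 0 < κ * r := by positivity
  have hκrR : κ * r ≤ R := by
    have h := mul_le_mul_of_nonneg_left hxb hκpos.le
    rwa [show κ * (1/κ * R) = R by field_simp] at h
  have hrR : r ≤ R := by nlinarith
  have hψr : 0 < ψstar (1/r) := hψpos _ (by positivity)
  have hψκr : 0 < ψstar (1/(κ*r)) := hψpos _ (by positivity)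
  have hw : Cstar * κ ^ β * ψstar (1/(κ*r)) ≤ ψstar (1/r) := by
    have h := hwlsc κ (1/(κ*r)) hκ1.le (one_div_le_one_div_of_le hκr hκrR)
    rwa [show κ * (1/(κ*r)) = 1/r by field_simp] at h
  have hkey : A / ψstar (1/r) ≤ c₁ / ψstar (1/(κ*r)) - c₂ / ψstar (1/r) := by
    have h1 : c₁ * Cstar * κ ^ β / ψstar (1/r) ≤ c₁ / ψstar (1/(κ*r)) := by
      rw [div_le_div_iff₀ hψr hψκr]
      nlinarith [mul_le_mul_of_nonneg_left hw hc₁.le]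
    have h2 : A / ψstar (1/r)
        = c₁ * Cstar * κ ^ β / ψstar (1/r) - c₂ / ψstar (1/r) := by
      rw [← sub_div]
    linarith
  have hsub : ball (0 : EuclideanSpace ℝ (Fin d)) r ⊆ ball 0 (κ*r) :=
    ball_subset_ball (by nlinarith)
  have hsplit : (∫⁻ y in ball (0 : EuclideanSpace ℝ (Fin d)) (κ*r), G y)
      = (∫⁻ y in ball (0 : EuclideanSpace ℝ (Fin d)) r, G y)
        + ∫⁻ y in (ball (0 : EuclideanSpace ℝ (Fin d)) (κ*r) \ ball 0 r), G y := by
    conv_lhs => rw [← union_diff_cancel hsub]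
    exact lintegral_union (measurableSet_ball.diff measurableSet_ball)
      disjoint_sdiff_self_right
  have hann : (∫⁻ y in (ball (0 : EuclideanSpace ℝ (Fin d)) (κ*r) \ ball 0 r), G y)
      ≤ G x * volume (ball (0 : EuclideanSpace ℝ (Fin d)) (κ*r)) := by
    calc (∫⁻ y in (ball (0 : EuclideanSpace ℝ (Fin d)) (κ*r) \ ball 0 r), G y)
        ≤ ∫⁻ _ in (ball (0 : EuclideanSpace ℝ (Fin d)) (κ*r) \ ball 0 r), G x := by
          refine setLIntegral_mono measurable_const fun y hy => ?_
          refine hradial x y ?_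
          have h2 := hy.2
          simp only [mem_ball, dist_zero_right, not_lt] at h2
          exact h2
      _ = G x * volume (ball (0 : EuclideanSpace ℝ (Fin d)) (κ*r) \ ball 0 r) := by
          rw [setLIntegral_const]
      _ ≤ G x * volume (ball (0 : EuclideanSpace ℝ (Fin d)) (κ*r)) :=
          mul_le_mul_right (measure_mono diff_subset) _
  have hb1 := (hbound (κ*r) hκr hκrR).1
  have hb2 := (hbound r hr hrR).2
  have hmain : ENNReal.ofReal (A / ψstar (1/r))
      ≤ G x * volume (ball (0 : EuclideanSpace ℝ (Fin d)) (κ*r)) := by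
    have h1 : ENNReal.ofReal (c₁ / ψstar (1/(κ*r)))
        ≤ ENNReal.ofReal (c₂ / ψstar (1/r))
          + G x * volume (ball (0 : EuclideanSpace ℝ (Fin d)) (κ*r)) := by
      calc ENNReal.ofReal (c₁ / ψstar (1/(κ*r)))
          ≤ ∫⁻ y in ball (0 : EuclideanSpace ℝ (Fin d)) (κ*r), G y := hb1
        _ = _ + _ := hsplit
        _ ≤ _ := add_le_add hb2 hann
    have h2 : ENNReal.ofReal (c₁ / ψstar (1/(κ*r))) - ENNReal.ofReal (c₂ / ψstar (1/r))
        ≤ G x * volume (ball (0 : EuclideanSpace ℝ (Fin d)) (κ*r)) :=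
      tsub_le_iff_left.mpr h1
    calc ENNReal.ofReal (A / ψstar (1/r))
        ≤ ENNReal.ofReal (c₁ / ψstar (1/(κ*r)) - c₂ / ψstar (1/r)) :=
          ENNReal.ofReal_le_ofReal hkey
      _ = ENNReal.ofReal (c₁ / ψstar (1/(κ*r))) - ENNReal.ofReal (c₂ / ψstar (1/r)) :=
          ENNReal.ofReal_sub _ (by positivity)
      _ ≤ _ := h2
  have hVol : volume (ball (0 : EuclideanSpace ℝ (Fin d)) (κ*r))
      = ENNReal.ofReal ((κ*r)^d * v) := by
    rw [Measure.addHaar_ball volume (0 : EuclideanSpace ℝ (Fin d)) hκr.le,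
      finrank_euclideanSpace_fin, ENNReal.ofReal_mul (by positivity), hvdef,
      ENNReal.ofReal_toReal measure_ball_lt_top.ne]
  have hVne : volume (ball (0 : EuclideanSpace ℝ (Fin d)) (κ*r)) ≠ 0 :=
    (measure_ball_pos _ _ hκr).ne'
  have hVtop : volume (ball (0 : EuclideanSpace ℝ (Fin d)) (κ*r)) ≠ ⊤ :=
    measure_ball_lt_top.ne
  rw [← ENNReal.mul_le_mul_iff_left hVne hVtop]
  have heq : ENNReal.ofReal (A / (κ ^ d * v) / (r ^ d * ψstar (1/r)))
      * volume (ball (0 : EuclideanSpace ℝ (Fin d)) (κ*r))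
      = ENNReal.ofReal (A / ψstar (1/r)) := by
    rw [hVol, ← ENNReal.ofReal_mul (by positivity)]
    congr 1
    rw [mul_pow]
    field_simp
  rw [heq]
  exact hmain
end

section
/- Let ν : ℝ^d → [0,∞) satisfy c₁^{-1}·f(|x|)/|x|^d ≤ ν(x) ≤ c₁·f(|x|)/|x|^d for all x ≠ 0, where f : (0,∞) → [0,∞) is non-increasing and satisfies f(λs) ≤ c₂λ^{-β}f(s) for all λ > 1, s > 0, with β > 0, c₂ ≥ 1. Define J(r) = ∫_{ℝ^d} min(1, (r|z|)²)·ν(z) dz for r > 0. Then J(λr) ≥ (c₁²c₂)^{-1}·λ^β·J(r) for all λ ≥ 1, r > 0 (provided J(r) < ∞), i.e. J satisfies the global weak lower scaling condition. -/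
open MeasureTheory Set
open scoped ENNReal

/-- Power-type lower scaling of the Lévy density profile implies global weak lower
scaling of `J(r) = ∫ min(1,(r|z|)²) ν(z) dz`. -/
theorem stmt_17 {d : ℕ} (ν : EuclideanSpace ℝ (Fin d) → ℝ)
    (f : ℝ → ℝ) (hf0 : ∀ s, 0 < s → 0 ≤ f s)
    (hfmono : ∀ s t : ℝ, 0 < s → s ≤ t → f t ≤ f s)
    (c₁ c₂ β : ℝ) (hc₁ : 0 < c₁) (hc₂ : 1 ≤ c₂) (hβ : 0 < β)
    (hν : ∀ x : EuclideanSpace ℝ (Fin d), x ≠ 0 →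
      c₁⁻¹ * (f ‖x‖ / ‖x‖ ^ d) ≤ ν x ∧ ν x ≤ c₁ * (f ‖x‖ / ‖x‖ ^ d))
    (hfscale : ∀ lam s : ℝ, 1 < lam → 0 < s → f (lam * s) ≤ c₂ * lam ^ (-β) * f s)
    (J : ℝ → ℝ≥0∞)
    (hJ : ∀ r, J r = ∫⁻ z : EuclideanSpace ℝ (Fin d),
      ENNReal.ofReal (min 1 ((r * ‖z‖) ^ 2) * ν z)) :
    ∀ lam r : ℝ, 1 ≤ lam → 0 < r → J r < ⊤ →
      ENNReal.ofReal ((c₁ ^ 2 * c₂)⁻¹ * lam ^ β) * J r ≤ J (lam * r) := by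
  intro lam r hlam hr _
  have hlam0 : 0 < lam := lt_of_lt_of_le one_pos hlam
  have hlamne : lam ≠ 0 := ne_of_gt hlam0
  have hinvne : lam⁻¹ ≠ 0 := inv_ne_zero hlamne
  have hc₂0 : 0 < c₂ := lt_of_lt_of_le one_pos hc₂
  set K : ℝ := (c₁ ^ 2 * c₂)⁻¹ with hK
  have hK0 : 0 < K := by rw [hK]; positivity
  have hA0 : 0 < lam ^ β := Real.rpow_pos_of_pos hlam0 β
  -- scaling of f for all lam ≥ 1
  have hfA : ∀ s : ℝ, 0 < s → lam ^ β * f s ≤ c₂ * f (lam⁻¹ * s) := by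
    intro s hs
    rcases eq_or_lt_of_le hlam with hl | hl
    · rw [← hl]
      simp only [Real.one_rpow, one_mul, inv_one]
      nlinarith [hf0 s hs]
    · have ht : 0 < lam⁻¹ * s := by positivity
      have h1 := hfscale lam (lam⁻¹ * s) hl ht
      rw [show lam * (lam⁻¹ * s) = s by field_simp] at h1
      rw [Real.rpow_neg hlam0.le β] at h1
      calc lam ^ β * f s ≤ lam ^ β * (c₂ * (lam ^ β)⁻¹ * f (lam⁻¹ * s)) :=
            mul_le_mul_of_nonneg_left h1 hA0.le
        _ = c₂ * f (lam⁻¹ * s) := by field_simp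
  -- core pointwise real inequality
  have hcore : ∀ w : EuclideanSpace ℝ (Fin d),
      (lam ^ d * (K * lam ^ β)) * (min 1 ((r * ‖w‖) ^ 2) * ν w)
        ≤ min 1 ((r * ‖w‖) ^ 2) * ν (lam⁻¹ • w) := by
    intro w
    by_cases hw : w = 0
    · subst hw
      simp
    · have hs : 0 < ‖w‖ := norm_pos_iff.mpr hw
      have hsne : ‖w‖ ≠ 0 := ne_of_gt hs
      have hm0 : (0:ℝ) ≤ min 1 ((r * ‖w‖) ^ 2) := le_min zero_le_one (sq_nonneg _)
      have hw' : lam⁻¹ • w ≠ 0 := smul_ne_zero hinvne hw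
      have hnorm : ‖lam⁻¹ • w‖ = lam⁻¹ * ‖w‖ := by
        rw [norm_smul, Real.norm_eq_abs, abs_of_pos (inv_pos.2 hlam0)]
      have ht : 0 < lam⁻¹ * ‖w‖ := by positivity
      have key : (lam ^ d * (K * lam ^ β)) * ν w ≤ ν (lam⁻¹ • w) := by
        have h2 := (hν w hw).2
        have h3 := (hν (lam⁻¹ • w) hw').1
        rw [hnorm] at h3
        calc (lam ^ d * (K * lam ^ β)) * ν w
            ≤ (lam ^ d * (K * lam ^ β)) * (c₁ * (f ‖w‖ / ‖w‖ ^ d)) :=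
              mul_le_mul_of_nonneg_left h2 (by positivity)
          _ = (c₁ * c₂)⁻¹ * (lam ^ β * f ‖w‖) * (lam ^ d / ‖w‖ ^ d) := by
              rw [hK]; field_simp
          _ ≤ (c₁ * c₂)⁻¹ * (c₂ * f (lam⁻¹ * ‖w‖)) * (lam ^ d / ‖w‖ ^ d) := by
              refine mul_le_mul_of_nonneg_right
                (mul_le_mul_of_nonneg_left (hfA ‖w‖ hs) (by positivity)) (by positivity)
          _ = c₁⁻¹ * (f (lam⁻¹ * ‖w‖) / (lam⁻¹ * ‖w‖) ^ d) := by
              field_simp [mul_pow]; rw [mul_assoc, ← mul_pow]; congr 2; field_simp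
          _ ≤ ν (lam⁻¹ • w) := h3
      calc (lam ^ d * (K * lam ^ β)) * (min 1 ((r * ‖w‖) ^ 2) * ν w)
          = min 1 ((r * ‖w‖) ^ 2) * ((lam ^ d * (K * lam ^ β)) * ν w) := by ring
        _ ≤ min 1 ((r * ‖w‖) ^ 2) * ν (lam⁻¹ • w) :=
            mul_le_mul_of_nonneg_left key hm0
  -- change of variables
  have hcov : ∀ F : EuclideanSpace ℝ (Fin d) → ℝ≥0∞,
      ∫⁻ w, F (lam⁻¹ • w) = ENNReal.ofReal (lam ^ d) * ∫⁻ z, F z := by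
    intro F
    let e : EuclideanSpace ℝ (Fin d) ≃ᵐ EuclideanSpace ℝ (Fin d) :=
      (Homeomorph.smul (isUnit_iff_ne_zero.2 hinvne).unit).toMeasurableEquiv
    have hco : ⇑e = (lam⁻¹ • ·) := by
      funext x
      show (isUnit_iff_ne_zero.2 hinvne).unit • x = lam⁻¹ • x
      rw [Units.smul_def, IsUnit.unit_spec]
    have hmap : Measure.map (⇑e) (volume : Measure (EuclideanSpace ℝ (Fin d)))
        = ENNReal.ofReal
            |((lam⁻¹) ^ Module.finrank ℝ (EuclideanSpace ℝ (Fin d)))⁻¹| • volume := by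
      rw [hco]; exact Measure.map_addHaar_smul volume hinvne
    have habs : |((lam⁻¹) ^ d)⁻¹| = lam ^ d := by
      rw [← inv_pow, inv_inv, abs_of_pos (pow_pos hlam0 d)]
    calc ∫⁻ w, F (lam⁻¹ • w) = ∫⁻ w, F (e w) := by rw [hco]
      _ = ∫⁻ z, F z ∂(Measure.map (⇑e) volume) := (lintegral_map_equiv F e).symm
      _ = ENNReal.ofReal (lam ^ d) * ∫⁻ z, F z := by
          rw [hmap, lintegral_smul_measure, finrank_euclideanSpace_fin, habs, smul_eq_mul]
  -- assemble
  have hd0 : (ENNReal.ofReal (lam ^ d)) ≠ 0 := (ENNReal.ofReal_pos.2 (by positivity)).ne'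
  rw [← ENNReal.mul_le_mul_iff_right hd0 ENNReal.ofReal_ne_top]
  calc ENNReal.ofReal (lam ^ d) * (ENNReal.ofReal (K * lam ^ β) * J r)
      = ∫⁻ z, ENNReal.ofReal ((lam ^ d * (K * lam ^ β)) *
          (min 1 ((r * ‖z‖) ^ 2) * ν z)) := by
        rw [hJ r, ← mul_assoc, ← ENNReal.ofReal_mul (by positivity),
          ← lintegral_const_mul' _ _ ENNReal.ofReal_ne_top]
        congr 1
        funext z
        rw [← ENNReal.ofReal_mul (by positivity), mul_assoc]
    _ ≤ ∫⁻ w, ENNReal.ofReal (min 1 ((r * ‖w‖) ^ 2) * ν (lam⁻¹ • w)) :=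
        lintegral_mono fun w => ENNReal.ofReal_le_ofReal (hcore w)
    _ = ∫⁻ w, ENNReal.ofReal (min 1 (((lam * r) * ‖lam⁻¹ • w‖) ^ 2) * ν (lam⁻¹ • w)) := by
        congr 1
        funext w
        have hnorm : ‖lam⁻¹ • w‖ = lam⁻¹ * ‖w‖ := by
          rw [norm_smul, Real.norm_eq_abs, abs_of_pos (inv_pos.2 hlam0)]
        rw [hnorm, show (lam * r) * (lam⁻¹ * ‖w‖) = r * ‖w‖ by field_simp]
    _ = ENNReal.ofReal (lam ^ d) * J (lam * r) := by
        rw [hJ (lam * r)]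
        exact hcov fun z => ENNReal.ofReal (min 1 (((lam * r) * ‖z‖) ^ 2) * ν z)
end
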